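/- If the 3CM M does not halt, then for every X ∈ {O, SO, R, E} there is no terminating (i.e., fair and finite) X-derivation from the knowledge base ⟨R_M, {End(w)}⟩. -/

import Mathlib

set_option maxHeartbeats 1000000
set_option synthInstance.maxHeartbeats 1000000
set_option synthInstance.maxSize 512

attribute [local instance] Classical.propDecidable

noncomputable section

/-! ### Terms and atoms -/

/-- Variables: ordinary variables `Sum.inl n`, or fresh variables `Sum.inr (c, k)`
introduced by the trigger with code `c` for the head variable with code `k`. -/
abbrev Var : Type := ℕ ⊕ (ℕ × ℕ)

/-- Terms: constants `Sum.inl c` or variables `Sum.inr v`. -/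
abbrev FTerm : Type := ℕ ⊕ Var

def ct (n : ℕ) : FTerm := Sum.inl n
def vt (n : ℕ) : FTerm := Sum.inr (Sum.inl n)

/-- An atom: a predicate name together with its list of arguments. -/
abbrev Atom : Type := ℕ × List FTerm

/-- Active domain: all terms occurring in an atom set. -/
def adom (J : Set Atom) : Set FTerm := {t | ∃ a ∈ J, t ∈ a.2}

def atomVarsF (a : Atom) : Finset Var := (a.2.filterMap Sum.getRight?).toFinset

def varsF (A : Finset Atom) : Finset Var := A.biUnion atomVarsF

def setVars (J : Set Atom) : Set Var := {v | ∃ a ∈ J, Sum.inr v ∈ a.2}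

/-! ### Substitutions and homomorphisms -/

abbrev Subst := Var → FTerm

def applyT (σ : Subst) : FTerm → FTerm
  | Sum.inl c => Sum.inl c
  | Sum.inr v => σ v

def applyA (σ : Subst) (a : Atom) : Atom := (a.1, a.2.map (applyT σ))

def IsHomOn (σ : Subst) (A B : Set Atom) : Prop := ∀ a ∈ A, applyA σ a ∈ B

def HomBetween (A B : Set Atom) : Prop := ∃ σ : Subst, IsHomOn σ A B

def IsRetraction (σ : Subst) (A B : Set Atom) : Prop :=
  IsHomOn σ A B ∧ ∀ v ∈ setVars A ∩ setVars B, σ v = Sum.inr v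

/-- Isomorphism of atom sets: a pair of mutually inverse homomorphisms. -/
def Isomorphic (A B : Set Atom) : Prop :=
  ∃ σ τ : Subst, IsHomOn σ A B ∧ IsHomOn τ B A ∧
    (∀ a ∈ A, applyA τ (applyA σ a) = a) ∧ (∀ b ∈ B, applyA σ (applyA τ b) = b)

/-! ### Rules -/

/-- A rule is a pair (body, head). Its existential variables are the head variables
not occurring in the body; its frontier the variables shared by body and head.
A rule is Datalog when every head variable occurs in the body. -/
abbrev Rule : Type := Finset Atom × Finset Atom

def frontierOf (R : Rule) : Finset Var := varsF R.1 ∩ varsF R.2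

def DatRules (Rset : Finset Rule) : Finset Rule := Rset.filter fun R => varsF R.2 ⊆ varsF R.1
def NDatRules (Rset : Finset Rule) : Finset Rule := Rset.filter fun R => ¬ varsF R.2 ⊆ varsF R.1

/-- Satisfaction of a rule in an atom set. -/
def SatisfiesRule (J : Set Atom) (R : Rule) : Prop :=
  ∀ σ : Subst, IsHomOn σ (R.1 : Set Atom) J →
    ∃ σ' : Subst, (∀ v ∈ varsF R.1, σ' v = σ v) ∧ IsHomOn σ' (R.2 : Set Atom) J

def IsModel (Rset : Finset Rule) (I J : Set Atom) : Prop :=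
  (∀ R ∈ Rset, SatisfiesRule J R) ∧ HomBetween I J

/-- BCQ entailment: every model of the KB satisfies the query. -/
def Entails (Rset : Finset Rule) (I q : Set Atom) : Prop :=
  ∀ J : Set Atom, IsModel Rset I J → HomBetween q J

def IsUniversalModel (Rset : Finset Rule) (I U : Set Atom) : Prop :=
  IsModel Rset I U ∧ ∀ J : Set Atom, IsModel Rset I J → HomBetween U J

/-! ### Triggers -/

structure Trigger where
  rule : Rule
  sub : Subst

/-- Injective code of a trigger (a trigger is determined by its rule and the
restriction of its substitution to the body variables). -/
def Trigger.code (t : Trigger) : ℕ :=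
  Encodable.encode (t.rule, (varsF t.rule.1).image fun v => (v, t.sub v))

/-- The canonical extension of the trigger substitution, mapping each existential
variable `z` to the fresh variable unique for `z` and the trigger. -/
def Trigger.extSub (t : Trigger) : Subst := fun v =>
  if v ∈ varsF t.rule.1 then t.sub v
  else Sum.inr (Sum.inr (t.code, Encodable.encode v))

def Trigger.out (t : Trigger) : Finset Atom := t.rule.2.image (applyA t.extSub)

def Trigger.isOn (t : Trigger) (J : Set Atom) : Prop := IsHomOn t.sub (t.rule.1 : Set Atom) J

/-! ### Chase variants, derivations, chase termination classes -/

inductive ChaseVariant : Type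
  | O | SO | R | E
deriving DecidableEq

def Applicable : ChaseVariant → Trigger → Set Atom → Prop
  | .O, t, J => ¬ ((t.out : Set Atom) ⊆ J)
  | .SO, t, J => ∀ t' : Trigger, t'.rule = t.rule → t'.isOn J →
      (∀ v ∈ frontierOf t.rule, t'.sub v = t.sub v) → ¬ ((t'.out : Set Atom) ⊆ J)
  | .R, t, J => ¬ ∃ σ : Subst, IsRetraction σ (J ∪ (t.out : Set Atom)) J
  | .E, t, J => ¬ ∃ σ : Subst, IsHomOn σ (J ∪ (t.out : Set Atom)) J

def instSeq (I : Set Atom) (steps : ℕ → Option Trigger) : ℕ → Set Atom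
  | 0 => I
  | n + 1 => instSeq I steps n ∪
      (match steps n with
        | none => (∅ : Set Atom)
        | some t => (t.out : Set Atom))

/-- A (possibly infinite) derivation from the knowledge base `⟨Rset, I⟩`. -/
structure Deriv (Rset : Finset Rule) (I : Set Atom) where
  steps : ℕ → Option Trigger
  prefix_closed : ∀ n, steps n = none → steps (n + 1) = none
  valid : ∀ n t, steps n = some t →
    t.rule ∈ Rset ∧ t.isOn (instSeq I steps n) ∧ ¬ ((t.out : Set Atom) ⊆ instSeq I steps n)

def Deriv.inst {Rset : Finset Rule} {I : Set Atom} (D : Deriv Rset I) (n : ℕ) :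
    Set Atom := instSeq I D.steps n

def Deriv.res {Rset : Finset Rule} {I : Set Atom} (D : Deriv Rset I) : Set Atom :=
  ⋃ n, D.inst n

def Deriv.Finite {Rset : Finset Rule} {I : Set Atom} (D : Deriv Rset I) : Prop :=
  ∃ n, D.steps n = none

def Deriv.IsX {Rset : Finset Rule} {I : Set Atom} (X : ChaseVariant)
    (D : Deriv Rset I) : Prop :=
  ∀ n t, D.steps n = some t → Applicable X t (D.inst n)

def Deriv.Fair {Rset : Finset Rule} {I : Set Atom} (X : ChaseVariant)
    (D : Deriv Rset I) : Prop :=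
  ∀ i, ∀ t : Trigger, t.rule ∈ Rset → t.isOn (D.inst i) → Applicable X t (D.inst i) →
    ∃ j, i < j ∧ ¬ Applicable X t (D.inst j)

/-- All-instance, all-derivation chase termination. -/
def CTall (X : ChaseVariant) (Rset : Finset Rule) : Prop :=
  ∀ I : Finset Atom, ∀ D : Deriv Rset (I : Set Atom), D.IsX X → D.Fair X → D.Finite

/-- All-instance, some-derivation chase termination. -/
def CTex (X : ChaseVariant) (Rset : Finset Rule) : Prop :=
  ∀ I : Finset Atom, ∃ D : Deriv Rset (I : Set Atom), D.IsX X ∧ D.Fair X ∧ D.Finite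

inductive CTQuant : Type
  | all | ex

def CT (X : ChaseVariant) : CTQuant → Finset Rule → Prop
  | .all => CTall X
  | .ex => CTex X

/-- The result of some fair `X`-derivation from `⟨Rset, J⟩`. -/
def ChX (X : ChaseVariant) (Rset : Finset Rule) (J : Set Atom) : Set Atom :=
  if h : ∃ D : Deriv Rset J, D.IsX X ∧ D.Fair X then h.choose.res else J

/-! ### Gaifman graph, treewidth, bts -/

def gaifmanAdj (J : Set Atom) (u v : FTerm) : Prop :=
  u ≠ v ∧ ∃ a ∈ J, u ∈ a.2 ∧ v ∈ a.2

/-- The (Gaifman graph of the) atom set `J` has treewidth at most `k`: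
there is a tree decomposition all of whose bags have size at most `k + 1`. -/
def TreewidthAtMost (J : Set Atom) (k : ℕ) : Prop :=
  ∃ (ι : Type) (T : SimpleGraph ι) (bag : ι → Finset FTerm),
    T.Connected ∧ T.IsAcyclic ∧
    (∀ v ∈ adom J, ∃ i, v ∈ bag i) ∧
    (∀ u v : FTerm, gaifmanAdj J u v → ∃ i, u ∈ bag i ∧ v ∈ bag i) ∧
    (∀ v : FTerm, (SimpleGraph.induce {i | v ∈ bag i} T).Preconnected) ∧
    (∀ i, (bag i).card ≤ k + 1)

/-- Bounded-treewidth sets: for every instance, some universal model of bounded treewidth. -/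
def IsBts (Rset : Finset Rule) : Prop :=
  ∀ I : Finset Atom, ∃ (k : ℕ) (U : Set Atom),
    IsUniversalModel Rset (I : Set Atom) U ∧ TreewidthAtMost U k

/-! ### Three-counter machines -/

/-- A three-counter machine: states `0, …, m − 1` (state `0` is initial, standing for `q₁`),
and a partial transition function given by a finite table. -/
structure TCM where
  m : ℕ
  hm : 0 < m
  δ : List ((ℕ × Bool × Bool) × (ℕ × Int × Int))
  keys_nodup : (δ.map Prod.fst).Nodup
  wf : ∀ e ∈ δ, e.1.1 < m ∧ e.2.1 < m ∧ e.2.2.1.natAbs ≤ 1 ∧ e.2.2.2.natAbs ≤ 1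

/-- A configuration: state, two counters, and the time counter. -/
abbrev Config : Type := ℕ × ℕ × ℕ × ℕ

def TCM.step (M : TCM) (q : ℕ) (b1 b2 : Bool) : Option (ℕ × Int × Int) :=
  (M.δ.find? fun e => decide (e.1 = (q, b1, b2))).map Prod.snd

def TCM.next (M : TCM) (C : Config) : Option Config :=
  match M.step C.1 (decide (C.2.1 ≠ 0)) (decide (C.2.2.1 ≠ 0)) with
  | none => none
  | some (q', d1, d2) =>
      some (q', ((C.2.1 : ℤ) + d1).toNat, ((C.2.2.1 : ℤ) + d2).toNat, C.2.2.2 + 1)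

def TCM.run (M : TCM) : ℕ → Option Config
  | 0 => some (0, 0, 0, 0)
  | n + 1 => (M.run n).bind M.next

/-- The machine halts: some reachable configuration has no successor. -/
def TCM.Halts (M : TCM) : Prop := ∃ n C, M.run n = some C ∧ M.next C = none

/-! ### Prime encoding of configurations -/

/-- The least prime strictly greater than `n` (computably). -/
def nextPrime (n : ℕ) : ℕ := Nat.find (Nat.exists_infinite_primes (n + 1))

/-- `prm i` is the `(i+1)`-st prime `p_{i+1}`, i.e. `prm 0 = 2`. -/
def prm : ℕ → ℕ
  | 0 => 2
  | k + 1 => nextPrime (prm k)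

/-- Encoding of a configuration as a natural number. -/
def TCM.enc (M : TCM) (C : Config) : ℕ :=
  prm C.1 * prm M.m ^ C.2.1 * prm (M.m + 1) ^ C.2.2.1 * prm (M.m + 2) ^ C.2.2.2

/-- `p = p₁ ⋯ p_{m+3}`. -/
def TCM.p (M : TCM) : ℕ := ∏ i ∈ Finset.range (M.m + 3), prm i

/-- Decode the state from a residue modulo `M.p`. -/
def TCM.stateOf (M : TCM) (i : ℕ) : Option ℕ :=
  (List.range M.m).find? fun s => decide (prm s ∣ i)

/-- The canonical pair `(q_i, r_i)` realizing the prime encoding of the transitions. -/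
def TCM.qr (M : TCM) (i : ℕ) : ℕ × ℕ :=
  match M.stateOf i with
  | none => (1, 1)
  | some s =>
      let b1 : Bool := decide (prm M.m ∣ i)
      let b2 : Bool := decide (prm (M.m + 1) ∣ i)
      match M.step s b1 b2 with
      | none => (1, 1)
      | some (s', d1, d2) =>
          let e1 : ℤ := if b1 then d1 else max d1 0
          let e2 : ℤ := if b2 then d2 else max d2 0
          let num : ℕ := prm s' * prm (M.m + 2) *
            (if e1 = 1 then prm M.m else 1) * (if e2 = 1 then prm (M.m + 1) else 1)
          let den : ℕ := prm s *
            (if e1 = -1 then prm M.m else 1) * (if e2 = -1 then prm (M.m + 1) else 1)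
          (num / Nat.gcd num den, den / Nat.gcd num den)

def TCM.qi (M : TCM) (i : ℕ) : ℕ := (M.qr i).1
def TCM.ri (M : TCM) (i : ℕ) : ℕ := (M.qr i).2

/-- `g(n) = q_{n mod p} · n / r_{n mod p}`. -/
def TCM.g (M : TCM) (n : ℕ) : ℕ := M.qi (n % M.p) * n / M.ri (n % M.p)

/-- `gᵏ(2)`. -/
def TCM.gIter (M : TCM) (k : ℕ) : ℕ := (M.g)^[k] 2

/-- `G = {gᵏ(2) : k ∈ ℕ}`. -/
def TCM.Gset (M : TCM) : Set ℕ := Set.range M.gIter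

/-! ### The rule set `R_M` -/

def pEnd : ℕ := 0
def pFlood : ℕ := 1
def pS0 : ℕ := 2
def pS : ℕ := 3
def pG : ℕ := 4
def pR (i : ℕ) : ℕ := 5 + 2 * i
def pT (i : ℕ) : ℕ := 6 + 2 * i

/-- `j`-th vertex of an `S`-path of length `n` from variable `a` to variable `b`
with fresh intermediate variables `base + 1, …, base + n − 1`. -/
def pathVar (a b base n j : ℕ) : FTerm :=
  if j = 0 then vt a else if j = n then vt b else vt (base + j)

/-- The atoms of `Sⁿ(x_a, x_b)`: an `S`-path of length `n`. -/
def spath (a b base n : ℕ) : Finset Atom :=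
  (Finset.range n).image fun j =>
    (pS, [pathVar a b base n j, pathVar a b base n (j + 1)])

/-- Rule (1): `S₀(x,y) → S(x,y)`. -/
def ruleS : Rule := ({(pS0, [vt 0, vt 1])}, {(pS, [vt 0, vt 1])})

/-- Rule (2): `R_i(x,y) ∧ S(y,z) → R_{i+1}(x,z)` (indices modulo `p`). -/
def ruleR (M : TCM) (i : ℕ) : Rule :=
  ({(pR i, [vt 0, vt 1]), (pS, [vt 1, vt 2])}, {(pR ((i + 1) % M.p), [vt 0, vt 2])})

/-- Rule (3): `T_i(x,y,z) ∧ S^{r_i}(y,y′) ∧ S^{q_i}(z,z′) → T_i(x,y′,z′)`. -/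
def ruleT (M : TCM) (i : ℕ) : Rule :=
  (({(pT i, [vt 0, vt 1, vt 2])} : Finset Atom) ∪ spath 1 3 10 (M.ri i) ∪
      spath 2 4 (11 + M.ri i) (M.qi i),
    {(pT i, [vt 0, vt 3, vt 4])})

/-- Rule (4): `S(x,y) → Flood(y)`. -/
def ruleFloodProp : Rule := ({(pS, [vt 0, vt 1])}, {(pFlood, [vt 1])})

/-- Rule (5): `End(x) → S(x,x)`. -/
def ruleSEnd : Rule := ({(pEnd, [vt 0])}, {(pS, [vt 0, vt 0])})

/-- Rule (6): `S²(x,y) → G(x,y)`. -/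
def ruleGInit : Rule := (spath 0 1 10 2, {(pG, [vt 0, vt 1])})

/-- Rule (7): `G(x,y) ∧ R_i(x,y) ∧ T_i(x,y,z) → G(x,z)`. -/
def ruleGStep (i : ℕ) : Rule :=
  ({(pG, [vt 0, vt 1]), (pR i, [vt 0, vt 1]), (pT i, [vt 0, vt 1, vt 2])},
    {(pG, [vt 0, vt 2])})

/-- Rule (8): `Flood(x) ∧ Flood(y) ∧ Flood(z) → G(x,y) ∧ ⋀_{j<p} (R_j(x,y) ∧ T_j(x,y,z))`. -/
def ruleFloodGen (M : TCM) : Rule :=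
  ({(pFlood, [vt 0]), (pFlood, [vt 1]), (pFlood, [vt 2])},
    ({(pG, [vt 0, vt 1])} : Finset Atom) ∪
      (Finset.range M.p).biUnion fun j =>
        {(pR j, [vt 0, vt 1]), (pT j, [vt 0, vt 1, vt 2])})

/-- Rule (9): `G(y,z) ∧ End(z) → ∃x (S₀(x,y) ∧ R₀(x,x) ∧ ⋀_{j<p} T_j(x,x,x))`. -/
def ruleEx (M : TCM) : Rule :=
  ({(pG, [vt 1, vt 2]), (pEnd, [vt 2])},
    ({(pS0, [vt 0, vt 1]), (pR 0, [vt 0, vt 0])} : Finset Atom) ∪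
      (Finset.range M.p).biUnion fun j => {(pT j, [vt 0, vt 0, vt 0])})

/-- The rule set `R_M`. -/
def RM (M : TCM) : Finset Rule :=
  ({ruleS, ruleFloodProp, ruleSEnd, ruleGInit, ruleFloodGen M, ruleEx M} : Finset Rule) ∪
    (Finset.range M.p).biUnion fun i => {ruleR M i, ruleT M i, ruleGStep i}

/-- The alternating Datalog/non-Datalog chase steps `Step^X_n`. -/
def StepX (X : ChaseVariant) (M : TCM) : ℕ → Set Atom → Set Atom
  | 0, I => ChX X (DatRules (RM M)) I
  | n + 1, I => ChX X (DatRules (RM M)) (ChX X (NDatRules (RM M)) (StepX X M n I))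

/-- The constant `w`, the "well of positivity". -/
def wC : FTerm := ct 0

/-- The instance `{End(w)}`. -/
def IE : Set Atom := {(pEnd, [wC])}

/-- Membership in the signature of `R_M` (predicate together with its arity). -/
def InSig (M : TCM) (a : Atom) : Prop :=
  ((a.1 = pEnd ∨ a.1 = pFlood) ∧ a.2.length = 1) ∨
  ((a.1 = pS0 ∨ a.1 = pS ∨ a.1 = pG ∨ ∃ i < M.p, a.1 = pR i) ∧ a.2.length = 2) ∨
  ((∃ i < M.p, a.1 = pT i) ∧ a.2.length = 3)

/-- The critical instance: all atoms `P(w, …, w)` over the signature of `R_M`. -/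
def Crit (M : TCM) : Set Atom := {a | InSig M a ∧ ∀ t ∈ a.2, t = wC}

/-- An `S`-path of length `k` from `s` to `t` in `J`. -/
def SPath (J : Set Atom) : ℕ → FTerm → FTerm → Prop
  | 0, s, t => s = t
  | k + 1, s, t => ∃ u, (pS, [s, u]) ∈ J ∧ SPath J k u t

/-- The restriction `J|_S`: atoms of `J` all of whose terms belong to `S`. -/
def restrictTo (J : Set Atom) (S : Set FTerm) : Set Atom := {a ∈ J | ∀ t ∈ a.2, t ∈ S}

/-- An explicit injective encoding of three-counter machines by natural numbers. -/
def encodeTCM (M : TCM) : ℕ := Encodable.encode (M.m, M.δ)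

namespace Stmt4

/-! #### Generic substitution lemmas -/

def idS : Subst := fun v => Sum.inr v

lemma applyT_idS (t : FTerm) : applyT idS t = t := by cases t <;> rfl

lemma applyA_idS (a : Atom) : applyA idS a = a := by
  obtain ⟨p, l⟩ := a
  simp only [applyA]
  congr 1
  exact (List.map_congr_left fun t _ => applyT_idS t).trans (List.map_id _)

lemma applyT_const (σ : Subst) (n : ℕ) : applyT σ (Sum.inl n) = Sum.inl n := rfl

/-! #### Primes -/

lemma nextPrime_spec (n : ℕ) :
    n + 1 ≤ nextPrime n ∧ (nextPrime n).Prime :=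
  Nat.find_spec (Nat.exists_infinite_primes (n + 1))

lemma prm_prime (k : ℕ) : (prm k).Prime := by
  cases k with
  | zero => exact Nat.prime_two
  | succ k => exact (nextPrime_spec (prm k)).2

lemma prm_lt_succ (k : ℕ) : prm k < prm (k + 1) := (nextPrime_spec (prm k)).1

lemma prm_strictMono : StrictMono prm := strictMono_nat_of_lt_succ prm_lt_succ

lemma prm_pos (k : ℕ) : 0 < prm k := (prm_prime k).pos

lemma prm_two_le (k : ℕ) : 2 ≤ prm k := (prm_prime k).two_le

lemma prm_inj {k l : ℕ} (h : prm k = prm l) : k = l := prm_strictMono.injective h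

lemma prime_dvd_prime_pow {p q a : ℕ} (hp : p.Prime) (hq : q.Prime) :
    p ∣ q ^ a ↔ (p = q ∧ 0 < a) := by
  constructor
  · intro h
    have hpq : p = q := (Nat.prime_dvd_prime_iff_eq hp hq).mp (hp.dvd_of_dvd_pow h)
    refine ⟨hpq, ?_⟩
    rcases Nat.eq_zero_or_pos a with rfl | ha
    · rw [pow_zero] at h
      exact absurd (Nat.le_of_dvd one_pos h) (by have := hp.two_le; omega)
    · exact ha
  · rintro ⟨rfl, ha⟩
    exact dvd_pow dvd_rfl (by omega)



/-! #### `find?` helper -/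

lemma find?_unique {α : Type*} (p : α → Bool) (l : List α) (a : α) (ha : a ∈ l)
    (h : ∀ x ∈ l, p x = true ↔ x = a) : l.find? p = some a := by
  induction l with
  | nil => cases ha
  | cons b t ih =>
    by_cases hb : p b = true
    · have : b = a := (h b List.mem_cons_self).mp hb
      rw [List.find?_cons_of_pos hb, this]
    · have hba : b ≠ a := fun e => hb ((h b List.mem_cons_self).mpr e)
      have ha' : a ∈ t := by
        rcases List.mem_cons.mp ha with rfl | h'
        · exact absurd rfl hba
        · exact h'
      rw [List.find?_cons_of_neg hb]
      exact ih ha' (fun x hx => h x (List.mem_cons_of_mem _ hx))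

/-! #### Facts about `M.p` -/

lemma p_pos (M : TCM) : 0 < M.p :=
  Finset.prod_pos (fun i _ => prm_pos i)

lemma prm_dvd_p (M : TCM) {l : ℕ} (hl : l < M.m + 3) : prm l ∣ M.p :=
  Finset.dvd_prod_of_mem _ (Finset.mem_range.mpr hl)

lemma two_le_p (M : TCM) : 2 ≤ M.p := by
  have h : prm 0 ∣ M.p := prm_dvd_p M (by omega)
  exact Nat.le_of_dvd (p_pos M) h

/-! #### Divisibility structure of `enc` -/

lemma dvd_enc_iff (M : TCM) (C : Config) {P : ℕ} (hP : P.Prime) :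
    P ∣ M.enc C ↔ (P = prm C.1 ∨ (P = prm M.m ∧ 0 < C.2.1) ∨
      (P = prm (M.m + 1) ∧ 0 < C.2.2.1) ∨ (P = prm (M.m + 2) ∧ 0 < C.2.2.2)) := by
  unfold TCM.enc
  rw [hP.dvd_mul, hP.dvd_mul, hP.dvd_mul,
    prime_dvd_prime_pow hP (prm_prime _), prime_dvd_prime_pow hP (prm_prime _),
    prime_dvd_prime_pow hP (prm_prime _),
    Nat.prime_dvd_prime_iff_eq hP (prm_prime _)]
  tauto

lemma dvd_mod_p_iff (M : TCM) {l : ℕ} (hl : l < M.m + 3) (n : ℕ) :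
    prm l ∣ n % M.p ↔ prm l ∣ n :=
  Nat.dvd_mod_iff (prm_dvd_p M hl)

/-! #### `step` well-formedness -/

lemma step_wf (M : TCM) {s : ℕ} {b1 b2 : Bool} {s' : ℕ} {d1 d2 : ℤ}
    (h : M.step s b1 b2 = some (s', d1, d2)) :
    s' < M.m ∧ d1.natAbs ≤ 1 ∧ d2.natAbs ≤ 1 := by
  unfold TCM.step at h
  rw [Option.map_eq_some_iff] at h
  obtain ⟨e, he, he2⟩ := h
  have hmem := List.mem_of_find?_eq_some he
  have hw := M.wf e hmem
  rw [he2] at hw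
  exact ⟨hw.2.1, hw.2.2.1, hw.2.2.2⟩

/-! #### The counter arithmetic -/

lemma counter_arith (P a : ℕ) (d : ℤ) (hd : d.natAbs ≤ 1) :
    P ^ ((a : ℤ) + d).toNat * (if (if a ≠ 0 then d else max d 0) = -1 then P else 1)
      = P ^ a * (if (if a ≠ 0 then d else max d 0) = 1 then P else 1) := by
  have hd3 : d = -1 ∨ d = 0 ∨ d = 1 := by omega
  by_cases ha : a ≠ 0
  · have ho : (if a ≠ 0 then d else max d 0) = d := if_pos ha
    rw [ho]
    rcases hd3 with rfl | rfl | rfl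
    · rw [if_pos rfl, if_neg (by norm_num)]
      have h1 : ((a : ℤ) + -1).toNat = a - 1 := by omega
      have h2 : a - 1 + 1 = a := by omega
      rw [h1, mul_one, ← pow_succ, h2]
    · rw [if_neg (by norm_num), if_neg (by norm_num)]
      have h1 : ((a : ℤ) + 0).toNat = a := by omega
      rw [h1]
    · rw [if_neg (by norm_num), if_pos rfl]
      have h1 : ((a : ℤ) + 1).toNat = a + 1 := by omega
      rw [h1, pow_succ, mul_one]
  · have ho : (if a ≠ 0 then d else max d 0) = max d 0 := if_neg ha
    rw [ho]
    push_neg at ha; subst ha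
    rcases hd3 with rfl | rfl | rfl
    · have hmax : max (-1 : ℤ) 0 = 0 := by norm_num
      rw [hmax, if_neg (by norm_num), if_neg (by norm_num)]
      have h1 : (((0:ℕ) : ℤ) + -1).toNat = 0 := by omega
      rw [h1]
    · have hmax : max (0 : ℤ) 0 = 0 := by norm_num
      rw [hmax, if_neg (by norm_num), if_neg (by norm_num)]
      have h1 : (((0:ℕ) : ℤ) + 0).toNat = 0 := by omega
      rw [h1]
    · have hmax : max (1 : ℤ) 0 = 1 := by norm_num
      rw [hmax, if_neg (by norm_num), if_pos rfl]
      have h1 : (((0:ℕ) : ℤ) + 1).toNat = 1 := by omega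
      rw [h1, pow_zero, pow_one, mul_one, one_mul]

/-! #### The key simulation step -/

lemma key_step (M : TCM) {C C' : Config} (hs : C.1 < M.m) (h : M.next C = some C') :
    M.enc C' * M.ri (M.enc C % M.p) = M.qi (M.enc C % M.p) * M.enc C ∧
    Nat.Coprime (M.qi (M.enc C % M.p)) (M.ri (M.enc C % M.p)) ∧
    0 < M.ri (M.enc C % M.p) ∧ 0 < M.qi (M.enc C % M.p) ∧
    C'.2.2.2 = C.2.2.2 + 1 ∧ C'.1 < M.m := by
  obtain ⟨s, a, b, t⟩ := C
  simp only at hs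
  have hred : M.next (s, a, b, t) = (match M.step s (decide (a ≠ 0)) (decide (b ≠ 0)) with
      | none => none
      | some (q', d1, d2) => some (q', ((a : ℤ) + d1).toNat, ((b : ℤ) + d2).toNat, t + 1)) := rfl
  cases hst : M.step s (decide (a ≠ 0)) (decide (b ≠ 0)) with
  | none =>
    exfalso
    rw [hred, hst] at h
    cases h
  | some trip =>
    obtain ⟨s', d1, d2⟩ := trip
    have hC' : C' = (s', ((a : ℤ) + d1).toNat, ((b : ℤ) + d2).toNat, t + 1) := by
      rw [hred, hst] at h
      exact (Option.some.inj h).symm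
    obtain ⟨hs', hd1, hd2⟩ := step_wf M hst
    set n := M.enc (s, a, b, t) with hn
    set i := n % M.p with hi
    have hstate : M.stateOf i = some s := by
      unfold TCM.stateOf
      apply find?_unique _ _ s (List.mem_range.mpr hs)
      intro x hx
      rw [List.mem_range] at hx
      rw [decide_eq_true_eq, hi, dvd_mod_p_iff M (by omega), hn,
        dvd_enc_iff M _ (prm_prime x)]
      simp only []
      constructor
      · rintro (hh | ⟨hh, _⟩ | ⟨hh, _⟩ | ⟨hh, _⟩) <;>
          (first | exact prm_inj hh | (exfalso; have := prm_inj hh; omega))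
      · rintro rfl; exact Or.inl rfl
    have hb1 : (decide (prm M.m ∣ i) : Bool) = decide (a ≠ 0) := by
      rw [decide_eq_decide, hi, dvd_mod_p_iff M (by omega), hn,
        dvd_enc_iff M _ (prm_prime _)]
      simp only []
      constructor
      · rintro (hh | ⟨_, ha⟩ | ⟨hh, _⟩ | ⟨hh, _⟩)
        · exfalso; have := prm_inj hh; omega
        · omega
        · exfalso; have := prm_inj hh; omega
        · exfalso; have := prm_inj hh; omega
      · intro ha; exact Or.inr (Or.inl ⟨by trivial, by omega⟩)
    have hb2 : (decide (prm (M.m + 1) ∣ i) : Bool) = decide (b ≠ 0) := by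
      rw [decide_eq_decide, hi, dvd_mod_p_iff M (by omega), hn,
        dvd_enc_iff M _ (prm_prime _)]
      simp only []
      constructor
      · rintro (hh | ⟨hh, _⟩ | ⟨_, hbpos⟩ | ⟨hh, _⟩)
        · exfalso; have := prm_inj hh; omega
        · exfalso; have := prm_inj hh; omega
        · omega
        · exfalso; have := prm_inj hh; omega
      · intro hb; exact Or.inr (Or.inr (Or.inl ⟨by trivial, by omega⟩))
    set e1 : ℤ := if a ≠ 0 then d1 else max d1 0 with he1
    set e2 : ℤ := if b ≠ 0 then d2 else max d2 0 with he2
    set num := prm s' * prm (M.m + 2) * (if e1 = 1 then prm M.m else 1) *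
      (if e2 = 1 then prm (M.m + 1) else 1) with hnum
    set den := prm s * (if e1 = -1 then prm M.m else 1) *
      (if e2 = -1 then prm (M.m + 1) else 1) with hden
    have hqr : M.qr i = (num / Nat.gcd num den, den / Nat.gcd num den) := by
      unfold TCM.qr
      rw [hstate, hb1, hb2]
      simp only [hst, decide_eq_true_eq]
      rfl
    have hriv : M.ri i = den / Nat.gcd num den := by
      show (M.qr i).2 = _; rw [hqr]
    have hqiv : M.qi i = num / Nat.gcd num den := by
      show (M.qr i).1 = _; rw [hqr]
    have hI1 : 0 < (if e1 = 1 then prm M.m else 1) := by split_ifs; exacts [prm_pos _, one_pos]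
    have hI2 : 0 < (if e2 = 1 then prm (M.m + 1) else 1) := by split_ifs; exacts [prm_pos _, one_pos]
    have hI3 : 0 < (if e1 = -1 then prm M.m else 1) := by split_ifs; exacts [prm_pos _, one_pos]
    have hI4 : 0 < (if e2 = -1 then prm (M.m + 1) else 1) := by split_ifs; exacts [prm_pos _, one_pos]
    have hnum_pos : 0 < num := by
      rw [hnum]; exact Nat.mul_pos (Nat.mul_pos (Nat.mul_pos (prm_pos _) (prm_pos _)) hI1) hI2
    have hden_pos : 0 < den := by
      rw [hden]; exact Nat.mul_pos (Nat.mul_pos (prm_pos _) hI3) hI4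
    have hgd_pos : 0 < Nat.gcd num den := Nat.gcd_pos_of_pos_left _ hnum_pos
    have h1 := counter_arith (prm M.m) a d1 hd1
    have h2 := counter_arith (prm (M.m + 1)) b d2 hd2
    rw [← he1] at h1
    rw [← he2] at h2
    have harith : M.enc C' * den = num * n := by
      rw [hC', hn]
      show M.enc (s', ((a : ℤ) + d1).toNat, ((b : ℤ) + d2).toNat, t + 1) * den
        = num * M.enc (s, a, b, t)
      unfold TCM.enc
      simp only []
      rw [hnum, hden]
      calc prm s' * prm M.m ^ ((a : ℤ) + d1).toNat * prm (M.m + 1) ^ ((b : ℤ) + d2).toNat *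
            prm (M.m + 2) ^ (t + 1) *
            (prm s * (if e1 = -1 then prm M.m else 1) * (if e2 = -1 then prm (M.m + 1) else 1))
          = (prm M.m ^ ((a : ℤ) + d1).toNat * (if e1 = -1 then prm M.m else 1)) *
            ((prm (M.m + 1) ^ ((b : ℤ) + d2).toNat * (if e2 = -1 then prm (M.m + 1) else 1)) *
             (prm s' * prm s * (prm (M.m + 2) ^ t * prm (M.m + 2)))) := by ring
        _ = (prm M.m ^ a * (if e1 = 1 then prm M.m else 1)) *
            ((prm (M.m + 1) ^ b * (if e2 = 1 then prm (M.m + 1) else 1)) *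
             (prm s' * prm s * (prm (M.m + 2) ^ t * prm (M.m + 2)))) := by rw [h1, h2]
        _ = _ := by ring
    have hmain : M.enc C' * M.ri i = M.qi i * n := by
      apply Nat.eq_of_mul_eq_mul_right hgd_pos
      calc M.enc C' * M.ri i * Nat.gcd num den
          = M.enc C' * (M.ri i * Nat.gcd num den) := by ring
        _ = M.enc C' * den := by rw [hriv, Nat.div_mul_cancel (Nat.gcd_dvd_right num den)]
        _ = num * n := harith
        _ = (M.qi i * Nat.gcd num den) * n := by
            rw [hqiv, Nat.div_mul_cancel (Nat.gcd_dvd_left num den)]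
        _ = M.qi i * n * Nat.gcd num den := by ring
    have hcop : Nat.Coprime (M.qi i) (M.ri i) := by
      rw [hriv, hqiv]; exact Nat.coprime_div_gcd_div_gcd hgd_pos
    have hri_pos : 0 < M.ri i := by
      rw [hriv]
      exact Nat.div_pos (Nat.le_of_dvd hden_pos (Nat.gcd_dvd_right _ _)) hgd_pos
    have hqi_pos : 0 < M.qi i := by
      rw [hqiv]
      exact Nat.div_pos (Nat.le_of_dvd hnum_pos (Nat.gcd_dvd_left _ _)) hgd_pos
    exact ⟨hmain, hcop, hri_pos, hqi_pos, by rw [hC'], by rw [hC']; exact hs'⟩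

lemma run_succ (M : TCM) {k : ℕ} {C : Config} (h : M.run k = some C) {C' : Config}
    (h' : M.next C = some C') : M.run (k + 1) = some C' := by
  show (M.run k).bind M.next = some C'
  rw [h, Option.bind_some, h']

lemma run_props (M : TCM) (hM : ¬ M.Halts) :
    ∀ k, ∃ C : Config, M.run k = some C ∧ C.1 < M.m ∧ C.2.2.2 = k ∧ M.gIter k = M.enc C := by
  intro k
  induction k with
  | zero =>
    refine ⟨(0, 0, 0, 0), rfl, M.hm, rfl, ?_⟩
    show M.gIter 0 = M.enc (0, 0, 0, 0)
    unfold TCM.gIter TCM.enc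
    norm_num
    rfl
  | succ k ih =>
    obtain ⟨C, hrun, hsm, htime, henc⟩ := ih
    obtain ⟨C', hC'⟩ : ∃ C', M.next C = some C' := by
      cases hnC : M.next C with
      | none => exact absurd ⟨k, C, hrun, hnC⟩ hM
      | some C2 => exact ⟨C2, rfl⟩
    obtain ⟨hmain, hcop, hrpos, hqpos, htime', hsm'⟩ := key_step M hsm hC'
    have hg : M.g (M.enc C) = M.enc C' := by
      unfold TCM.g
      rw [← hmain, Nat.mul_div_cancel _ hrpos]
    refine ⟨C', run_succ M hrun hC', hsm', by omega, ?_⟩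
    rw [show M.gIter (k + 1) = M.g (M.gIter k) from Function.iterate_succ_apply' _ _ _,
      henc, hg]

lemma next_of_run (M : TCM) (hM : ¬ M.Halts) {k : ℕ} {C : Config} (h : M.run k = some C) :
    ∃ C', M.next C = some C' := by
  cases hnC : M.next C with
  | none => exact absurd ⟨k, C, h, hnC⟩ hM
  | some C2 => exact ⟨C2, rfl⟩

lemma enc_lower (M : TCM) (C : Config) : 2 ^ C.2.2.2 ≤ M.enc C := by
  calc 2 ^ C.2.2.2 ≤ prm (M.m + 2) ^ C.2.2.2 := Nat.pow_le_pow_left (prm_two_le _) _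
    _ ≤ M.enc C := by
        unfold TCM.enc
        have hpos : 0 < prm C.1 * prm M.m ^ C.2.1 * prm (M.m + 1) ^ C.2.2.1 :=
          Nat.mul_pos (Nat.mul_pos (prm_pos _) (Nat.pow_pos (prm_pos _)))
            (Nat.pow_pos (prm_pos _))
        calc prm (M.m + 2) ^ C.2.2.2 = 1 * prm (M.m + 2) ^ C.2.2.2 := (one_mul _).symm
          _ ≤ _ := Nat.mul_le_mul_right _ hpos

lemma exists_gIter_ge (M : TCM) (hM : ¬ M.Halts) (n : ℕ) : ∃ j, n ≤ M.gIter j := by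
  refine ⟨n, ?_⟩
  obtain ⟨C, _, _, htime, henc⟩ := run_props M hM n
  rw [henc]
  calc n ≤ 2 ^ n := (Nat.lt_two_pow_self (n := n)).le
    _ = 2 ^ C.2.2.2 := by rw [htime]
    _ ≤ M.enc C := enc_lower M C

lemma gIter_facts (M : TCM) (hM : ¬ M.Halts) (k : ℕ) :
    0 < M.ri (M.gIter k % M.p) ∧ 0 < M.qi (M.gIter k % M.p) ∧
    M.ri (M.gIter k % M.p) ∣ M.gIter k ∧
    M.gIter (k + 1) = (M.gIter k / M.ri (M.gIter k % M.p)) * M.qi (M.gIter k % M.p) := by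
  obtain ⟨C, hrun, hsm, htime, henc⟩ := run_props M hM k
  obtain ⟨C', hC'⟩ := next_of_run M hM hrun
  obtain ⟨hmain, hcop, hrpos, hqpos, _, _⟩ := key_step M hsm hC'
  rw [henc]
  set v := M.enc C with hv
  set r := M.ri (v % M.p) with hr
  set q := M.qi (v % M.p) with hq
  have hdvd : r ∣ v := by
    have h1 : r ∣ v * q := ⟨M.enc C', by rw [mul_comm v q, ← hmain, mul_comm]⟩
    exact Nat.Coprime.dvd_of_dvd_mul_right hcop.symm h1
  refine ⟨hrpos, hqpos, hdvd, ?_⟩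
  have hgv : M.gIter (k + 1) = M.enc C' := by
    rw [show M.gIter (k + 1) = M.g (M.gIter k) from Function.iterate_succ_apply' _ _ _, henc]
    show M.qi (v % M.p) * v / M.ri (v % M.p) = M.enc C'
    rw [← hq, ← hr, ← hmain, Nat.mul_div_cancel _ hrpos]
  rw [hgv]
  apply Nat.eq_of_mul_eq_mul_right hrpos
  calc M.enc C' * r = q * v := hmain
    _ = q * (v / r * r) := by rw [Nat.div_mul_cancel hdvd]
    _ = v / r * q * r := by ring


/-! #### Variable-set computations -/

lemma mem_atomVarsF {a : Atom} {v : Var} : v ∈ atomVarsF a ↔ Sum.inr v ∈ a.2 := by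
  simp only [atomVarsF, List.mem_toFinset, List.mem_filterMap]
  constructor
  · rintro ⟨term, hterm, hget⟩
    cases term with
    | inl c => simp [Sum.getRight?] at hget
    | inr u => simp [Sum.getRight?] at hget; rwa [hget] at hterm
  · intro h
    exact ⟨Sum.inr v, h, rfl⟩

lemma mem_varsF {A : Finset Atom} {v : Var} :
    v ∈ varsF A ↔ ∃ a ∈ A, Sum.inr v ∈ a.2 := by
  simp only [varsF, Finset.mem_biUnion, mem_atomVarsF]

lemma applyA_eq_self {σ : Subst} {a : Atom} (h : ∀ term ∈ a.2, applyT σ term = term) :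
    applyA σ a = a := by
  obtain ⟨P, l⟩ := a
  simp only [applyA]
  congr 1
  exact (List.map_congr_left h).trans (List.map_id _)

lemma applyA_applyA (σ τ : Subst) (a : Atom) :
    applyA σ (applyA τ a) = (a.1, a.2.map (fun x => applyT σ (applyT τ x))) := by
  simp [applyA, List.map_map, Function.comp]

lemma sub_var_mem_setVars {J : Set Atom} {t : Trigger} {v : Var} {u : Var}
    (hon : t.isOn J) (hv : v ∈ varsF t.rule.1) (heq : t.sub v = Sum.inr u) :
    u ∈ setVars J := by
  obtain ⟨b, hb, hvb⟩ := mem_varsF.mp hv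
  refine ⟨applyA t.sub b, hon b (Finset.mem_coe.mpr hb), ?_⟩
  show Sum.inr u ∈ b.2.map (applyT t.sub)
  exact List.mem_map.mpr ⟨Sum.inr v, hvb, by simp [applyT, heq]⟩

/-! #### Trigger code injectivity -/

lemma code_inj {t t' : Trigger} (h : t.code = t'.code) :
    t.rule = t'.rule ∧ ∀ v ∈ varsF t.rule.1, t.sub v = t'.sub v := by
  have hp := Encodable.encode_injective h
  have h1 : t.rule = t'.rule := congrArg Prod.fst hp
  have h2 : (varsF t.rule.1).image (fun v => (v, t.sub v)) =
      (varsF t'.rule.1).image (fun v => (v, t'.sub v)) := congrArg Prod.snd hp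
  refine ⟨h1, fun v hv => ?_⟩
  have hmem : (v, t.sub v) ∈ (varsF t'.rule.1).image (fun v => (v, t'.sub v)) := by
    rw [← h2]
    exact Finset.mem_image_of_mem _ hv
  obtain ⟨u, _, he⟩ := Finset.mem_image.mp hmem
  have hu1 : u = v := congrArg Prod.fst he
  have hu2 : t'.sub u = t.sub v := congrArg Prod.snd he
  subst hu1
  exact hu2.symm

lemma extSub_eq_of_code_eq {t t' : Trigger} (h : t.code = t'.code) :
    t.extSub = t'.extSub := by
  obtain ⟨hr, hsub⟩ := code_inj h
  funext v
  unfold Trigger.extSub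
  rw [← hr, h]
  by_cases hv : v ∈ varsF t.rule.1
  · rw [if_pos hv, if_pos hv, hsub v hv]
  · rw [if_neg hv, if_neg hv]

lemma out_eq_of_code_eq {t t' : Trigger} (h : t.code = t'.code) : t.out = t'.out := by
  unfold Trigger.out
  rw [(code_inj h).1, extSub_eq_of_code_eq h]

/-! #### Derivation structure -/

lemma instSeq_le {I : Set Atom} {steps : ℕ → Option Trigger} {a b : ℕ} (h : a ≤ b) :
    instSeq I steps a ⊆ instSeq I steps b := by
  induction b with
  | zero => rw [Nat.le_zero.mp h]
  | succ b ih =>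
    rcases Nat.lt_or_ge a (b + 1) with hab | hab
    · exact (ih (by omega)).trans Set.subset_union_left
    · rw [Nat.le_antisymm h hab]

lemma steps_none_ge {Rset : Finset Rule} {I : Set Atom} (D : Deriv Rset I) {N n : ℕ}
    (hN : D.steps N = none) (h : N ≤ n) : D.steps n = none := by
  induction n with
  | zero => rw [Nat.le_zero.mp h] at hN; exact hN
  | succ n ih =>
    rcases Nat.lt_or_ge N (n + 1) with hab | hab
    · exact D.prefix_closed n (ih (by omega))
    · rw [← Nat.le_antisymm h hab]; exact hN

lemma inst_stab {Rset : Finset Rule} {I : Set Atom} (D : Deriv Rset I) {N n : ℕ}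
    (hN : D.steps N = none) (h : N ≤ n) : D.inst n = D.inst N := by
  induction n with
  | zero => rw [Nat.le_zero.mp h]
  | succ n ih =>
    rcases Nat.lt_or_ge N (n + 1) with hab | hab
    · have hn : N ≤ n := by omega
      have : D.steps n = none := steps_none_ge D hN hn
      show D.inst n ∪ _ = D.inst N
      rw [this, ih hn]
      exact Set.union_empty _
    · rw [← Nat.le_antisymm h hab]

lemma inst_cases {Rset : Finset Rule} {I : Set Atom} (D : Deriv Rset I) :
    ∀ n, ∀ a ∈ D.inst n, a ∈ I ∨ ∃ k t, k < n ∧ D.steps k = some t ∧ a ∈ t.out := by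
  intro n
  induction n with
  | zero => intro a ha; exact Or.inl ha
  | succ n ih =>
    intro a ha
    rcases ha with ha | ha
    · rcases ih a ha with h | ⟨k, t, hk, hst, hout⟩
      · exact Or.inl h
      · exact Or.inr ⟨k, t, by omega, hst, hout⟩
    · cases hsn : D.steps n with
      | none => rw [hsn] at ha; cases ha
      | some t =>
        rw [hsn] at ha
        exact Or.inr ⟨n, t, by omega, hsn, Finset.mem_coe.mp ha⟩

lemma out_subset_inst {Rset : Finset Rule} {I : Set Atom} (D : Deriv Rset I) {k : ℕ}
    {t : Trigger} (hk : D.steps k = some t) {n : ℕ} (hkn : k < n) :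
    ↑t.out ⊆ D.inst n := by
  have h1 : ↑t.out ⊆ D.inst (k + 1) := by
    show ↑t.out ⊆ D.inst k ∪ _
    rw [hk]
    exact Set.subset_union_right
  exact h1.trans (instSeq_le (by omega))

lemma setVars_structure {M : TCM} (D : Deriv (RM M) IE) :
    ∀ n, ∀ c k : ℕ, Sum.inr (c, k) ∈ setVars (D.inst n) →
      ∃ k' t, D.steps k' = some t ∧ k' < n ∧ t.code = c := by
  intro n
  induction n with
  | zero =>
    rintro c k ⟨a, ha, hmem⟩
    rw [show a = (pEnd, [wC]) from ha] at hmem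
    simp [wC, ct] at hmem
  | succ n ih =>
    rintro c k ⟨a, ha, hmem⟩
    rcases ha with ha | ha
    · obtain ⟨k', t, hst, hk', hc⟩ := ih c k ⟨a, ha, hmem⟩
      exact ⟨k', t, hst, by omega, hc⟩
    · cases hsn : D.steps n with
      | none => rw [hsn] at ha; cases ha
      | some t =>
        rw [hsn] at ha
        obtain ⟨h, hh, hha⟩ := Finset.mem_image.mp (Finset.mem_coe.mp ha)
        rw [← hha] at hmem
        obtain ⟨term, hterm, happ⟩ := List.mem_map.mp hmem
        cases term with
        | inl c' => cases happ
        | inr v =>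
          have hv : t.extSub v = Sum.inr (Sum.inr (c, k)) := happ
          unfold Trigger.extSub at hv
          by_cases hvb : v ∈ varsF t.rule.1
          · rw [if_pos hvb] at hv
            have hon : t.isOn (D.inst n) := (D.valid n t hsn).2.1
            have := sub_var_mem_setVars hon hvb hv
            obtain ⟨k', t', hst, hk', hc⟩ := ih c k this
            exact ⟨k', t', hst, by omega, hc⟩
          · rw [if_neg hvb] at hv
            have : (t.code, Encodable.encode v) = (c, k) := by
              have := Sum.inr.inj (Sum.inr.inj hv)
              exact this
            exact ⟨n, t, hsn, by omega, congrArg Prod.fst this⟩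

/-! #### Rule-set membership and head analysis -/

lemma mem_RM {M : TCM} {r : Rule} (h : r ∈ RM M) :
    r = ruleS ∨ r = ruleFloodProp ∨ r = ruleSEnd ∨ r = ruleGInit ∨
    r = ruleFloodGen M ∨ r = ruleEx M ∨
    ∃ i < M.p, r = ruleR M i ∨ r = ruleT M i ∨ r = ruleGStep i := by
  simp only [RM, Finset.mem_union, Finset.mem_insert, Finset.mem_singleton,
    Finset.mem_biUnion, Finset.mem_range] at h
  rcases h with (h | h | h | h | h | h) | ⟨i, hi, h⟩
  · exact Or.inl h
  · exact Or.inr (Or.inl h)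
  · exact Or.inr (Or.inr (Or.inl h))
  · exact Or.inr (Or.inr (Or.inr (Or.inl h)))
  · exact Or.inr (Or.inr (Or.inr (Or.inr (Or.inl h))))
  · exact Or.inr (Or.inr (Or.inr (Or.inr (Or.inr (Or.inl h)))))
  · refine Or.inr (Or.inr (Or.inr (Or.inr (Or.inr (Or.inr ⟨i, hi, ?_⟩)))))
    simpa using h

lemma ruleEx_body_vars0 {M : TCM} : (Sum.inl 0 : Var) ∉ varsF (ruleEx M).1 := by
  rw [mem_varsF]
  rintro ⟨a, haA, hmem⟩
  simp only [ruleEx, Finset.mem_insert, Finset.mem_singleton] at haA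
  rcases haA with rfl | rfl <;> simp [vt] at hmem

lemma ruleEx_body_vars1 {M : TCM} : (Sum.inl 1 : Var) ∈ varsF (ruleEx M).1 :=
  mem_varsF.mpr ⟨(pG, [vt 1, vt 2]), by simp [ruleEx], by simp [vt]⟩

def fresh0 (t : Trigger) : FTerm :=
  Sum.inr (Sum.inr (t.code, Encodable.encode (Sum.inl 0 : Var)))

lemma out_pred_S0 {M : TCM} {t : Trigger} (hr : t.rule ∈ RM M) {a : Atom} (ha : a ∈ t.out)
    (hp : a.1 = pS0) : t.rule = ruleEx M ∧ a = applyA t.extSub (pS0, [vt 0, vt 1]) := by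
  obtain ⟨h, hh, hha⟩ := Finset.mem_image.mp ha
  have hp' : h.1 = pS0 := by rw [← hha] at hp; exact hp
  rcases mem_RM hr with hre | hre | hre | hre | hre | hre | ⟨i, hi, hre | hre | hre⟩ <;>
    rw [hre] at hh
  · exfalso
    simp only [ruleS, Finset.mem_singleton] at hh
    rw [hh] at hp'
    norm_num [pS, pS0] at hp'
  · exfalso
    simp only [ruleFloodProp, Finset.mem_singleton] at hh
    rw [hh] at hp'
    norm_num [pFlood, pS0] at hp'
  · exfalso
    simp only [ruleSEnd, Finset.mem_singleton] at hh
    rw [hh] at hp'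
    norm_num [pS, pS0] at hp'
  · exfalso
    simp only [ruleGInit, Finset.mem_singleton] at hh
    rw [hh] at hp'
    norm_num [pG, pS0] at hp'
  · exfalso
    simp only [ruleFloodGen, Finset.mem_union, Finset.mem_singleton,
      Finset.mem_biUnion, Finset.mem_range, Finset.mem_insert] at hh
    rcases hh with hh | ⟨j, _, hh | hh⟩ <;> rw [hh] at hp' <;>
      simp only [pG, pR, pT, pS0] at hp' <;> omega
  · simp only [ruleEx, Finset.mem_union, Finset.mem_singleton,
      Finset.mem_biUnion, Finset.mem_range, Finset.mem_insert] at hh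
    rcases hh with (hh | hh) | ⟨j, _, hh⟩
    · exact ⟨hre, by rw [← hha, hh]⟩
    · exfalso; rw [hh] at hp'; simp only [pR, pS0] at hp'; omega
    · exfalso; rw [hh] at hp'; simp only [pT, pS0] at hp'; omega
  · exfalso
    simp only [ruleR, Finset.mem_singleton] at hh
    rw [hh] at hp'
    simp only [pR, pS0] at hp'
    omega
  · exfalso
    simp only [ruleT, Finset.mem_singleton] at hh
    rw [hh] at hp'
    simp only [pT, pS0] at hp'
    omega
  · exfalso
    simp only [ruleGStep, Finset.mem_singleton] at hh
    rw [hh] at hp'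
    norm_num [pG, pS0] at hp'

lemma S0_shape {M : TCM} (D : Deriv (RM M) IE) (n : ℕ) {l : List FTerm}
    (h : (pS0, l) ∈ D.inst n) :
    ∃ k t, D.steps k = some t ∧ k < n ∧ t.rule = ruleEx M ∧
      l = [fresh0 t, t.sub (Sum.inl 1)] := by
  rcases inst_cases D n _ h with hIE | ⟨k, t, hk, hst, hout⟩
  · exfalso
    have : pS0 = pEnd := congrArg Prod.fst hIE
    norm_num [pS0, pEnd] at this
  · have hrt := (D.valid k t hst).1
    obtain ⟨hre, hae⟩ := out_pred_S0 hrt hout rfl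
    refine ⟨k, t, hst, hk, hre, ?_⟩
    have hl : l = [applyT t.extSub (vt 0), applyT t.extSub (vt 1)] :=
      congrArg Prod.snd hae
    rw [hl]
    congr 1
    · show t.extSub (Sum.inl 0) = fresh0 t
      unfold Trigger.extSub
      rw [if_neg (by rw [hre]; exact ruleEx_body_vars0)]
      rfl
    · congr 1
      show t.extSub (Sum.inl 1) = t.sub (Sum.inl 1)
      unfold Trigger.extSub
      rw [if_pos (by rw [hre]; exact ruleEx_body_vars1)]

lemma S0_func {M : TCM} (D : Deriv (RM M) IE) {n n' : ℕ} {x y y' : FTerm}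
    (h1 : (pS0, [x, y]) ∈ D.inst n) (h2 : (pS0, [x, y']) ∈ D.inst n') : y = y' := by
  obtain ⟨k, t, hst, _, hre, hl⟩ := S0_shape D n h1
  obtain ⟨k', t', hst', _, hre', hl'⟩ := S0_shape D n' h2
  have hx : fresh0 t = fresh0 t' := by
    have e1 : x = fresh0 t := by injection hl
    have e2 : x = fresh0 t' := by injection hl'
    rw [← e1, ← e2]
  have hcode : t.code = t'.code := by
    have := Sum.inr.inj (Sum.inr.inj hx)
    exact congrArg Prod.fst this
  have hy : y = t.sub (Sum.inl 1) :=
    (show x = fresh0 t ∧ y = t.sub (Sum.inl 1) by simpa using hl).2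
  have hy' : y' = t'.sub (Sum.inl 1) :=
    (show x = fresh0 t' ∧ y' = t'.sub (Sum.inl 1) by simpa using hl').2
  have hsub := (code_inj hcode).2 (Sum.inl 1) (by rw [hre]; exact ruleEx_body_vars1)
  rw [hy, hy', hsub]

lemma S0_no_w {M : TCM} (D : Deriv (RM M) IE) {n : ℕ} {y : FTerm}
    (h : (pS0, [wC, y]) ∈ D.inst n) : False := by
  obtain ⟨k, t, _, _, _, hl⟩ := S0_shape D n h
  have : wC = fresh0 t := by injection hl
  exact absurd this (by simp [wC, ct, fresh0])

/-! #### Hom-closure of the final instance -/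

lemma not_applicable_final {M : TCM} (D : Deriv (RM M) IE) {X : ChaseVariant}
    (hFair : D.Fair X) {N : ℕ} (hN : D.steps N = none) {t : Trigger}
    (hrt : t.rule ∈ RM M) (hon : t.isOn (D.inst N)) : ¬ Applicable X t (D.inst N) := by
  intro hA
  obtain ⟨j, hj, hnA⟩ := hFair N t hrt hon hA
  rw [inst_stab D hN (le_of_lt hj)] at hnA
  exact hnA hA

lemma homClose {M : TCM} (D : Deriv (RM M) IE) {X : ChaseVariant}
    (hFair : D.Fair X) {N : ℕ} (hN : D.steps N = none) {t : Trigger}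
    (hrt : t.rule ∈ RM M) (hon : t.isOn (D.inst N)) :
    ∃ H : Subst, IsHomOn H (D.inst N) (D.inst N) ∧ IsHomOn H ↑t.out (D.inst N) := by
  have hNA := not_applicable_final D hFair hN hrt hon
  cases X with
  | O =>
    have hsub : ↑t.out ⊆ D.inst N := not_not.mp hNA
    exact ⟨idS, fun a ha => by rw [applyA_idS]; exact ha,
      fun a ha => by rw [applyA_idS]; exact hsub ha⟩
  | R =>
    obtain ⟨σ, hσ1, _⟩ := not_not.mp hNA
    exact ⟨σ, fun a ha => hσ1 a (Or.inl ha), fun a ha => hσ1 a (Or.inr ha)⟩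
  | E =>
    obtain ⟨σ, hσ1⟩ := not_not.mp hNA
    exact ⟨σ, fun a ha => hσ1 a (Or.inl ha), fun a ha => hσ1 a (Or.inr ha)⟩
  | SO =>
    by_cases hsub : ↑t.out ⊆ D.inst N
    · exact ⟨idS, fun a ha => by rw [applyA_idS]; exact ha,
        fun a ha => by rw [applyA_idS]; exact hsub ha⟩
    · have hNA' : ∃ t' : Trigger, t'.rule = t.rule ∧ t'.isOn (D.inst N) ∧
          (∀ v ∈ frontierOf t.rule, t'.sub v = t.sub v) ∧ ↑t'.out ⊆ D.inst N := by
        by_contra hno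
        push_neg at hno
        exact hNA (fun t' h1 h2 h3 => hno t' h1 h2 h3)
      obtain ⟨t', hrule, hon', hfr, hsub'⟩ := hNA' 
      have hfreshJ : ∀ k : ℕ, (Sum.inr (t.code, k) : Var) ∉ setVars (D.inst N) := by
        intro k hk
        obtain ⟨k', t'', hst'', hk', hcode⟩ := setVars_structure D N t.code k hk
        refine hsub ?_
        rw [out_eq_of_code_eq (hcode.symm : t.code = t''.code)]
        exact out_subset_inst D hst'' hk'
      set H : Subst := fun v => match v with
        | Sum.inl m => Sum.inr (Sum.inl m)
        | Sum.inr p => if p.1 = t.code then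
            ((Encodable.decode p.2 : Option Var).elim (Sum.inr (Sum.inr p)) t'.extSub)
          else Sum.inr (Sum.inr p) with hH
      have hfix : ∀ u ∈ setVars (D.inst N), H u = Sum.inr u := by
        intro u hu
        cases u with
        | inl m => rfl
        | inr p =>
          obtain ⟨c0, k0⟩ := p
          show (if (c0, k0).1 = t.code then _ else _) = _
          rw [if_neg]
          intro hpc
          have : (c0, k0).1 = t.code := hpc
          exact hfreshJ k0 (by rw [show t.code = c0 from this.symm]; exact hu)
      have hHJ : IsHomOn H (D.inst N) (D.inst N) := by
        intro a ha
        rw [applyA_eq_self (fun term hterm => ?_)]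
        · exact ha
        · cases term with
          | inl c => rfl
          | inr u => exact hfix u ⟨a, ha, hterm⟩
      refine ⟨H, hHJ, ?_⟩
      intro a ha
      obtain ⟨h, hh, hha⟩ := Finset.mem_image.mp (Finset.mem_coe.mp ha)
      have hterms : ∀ term ∈ h.2, applyT H (applyT t.extSub term) = applyT t'.extSub term := by
        intro term hterm
        cases term with
        | inl c => rfl
        | inr v =>
          show applyT H (t.extSub v) = t'.extSub v
          by_cases hv : v ∈ varsF t.rule.1
          · have h1 : t.extSub v = t.sub v := by unfold Trigger.extSub; rw [if_pos hv]
            have hv' : v ∈ varsF t'.rule.1 := by rw [hrule]; exact hv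
            have h2 : t'.extSub v = t'.sub v := by unfold Trigger.extSub; rw [if_pos hv']
            have hvh : v ∈ varsF t.rule.2 := mem_varsF.mpr ⟨h, hh, hterm⟩
            have hfrv : t'.sub v = t.sub v := hfr v (Finset.mem_inter.mpr ⟨hv, hvh⟩)
            rw [h1, h2, hfrv]
            cases hsv : t.sub v with
            | inl c => rfl
            | inr u =>
              show H u = Sum.inr u
              exact hfix u (sub_var_mem_setVars hon hv hsv)
          · have h1 : t.extSub v = Sum.inr (Sum.inr (t.code, Encodable.encode v)) := by
              unfold Trigger.extSub; rw [if_neg hv]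
            rw [h1]
            show (if (t.code, Encodable.encode v).1 = t.code then _ else _) = _
            rw [if_pos rfl]
            simp [Encodable.encodek]
      have key : applyA H (applyA t.extSub h) = applyA t'.extSub h := by
        rw [applyA_applyA]
        show (h.1, _) = (h.1, _)
        exact congrArg _ (List.map_congr_left hterms)
      rw [← hha, key]
      refine hsub' ?_
      exact Finset.mem_coe.mpr (Finset.mem_image_of_mem _ (by rw [hrule]; exact hh))

/-! #### Chains -/

def ChainOK (M : TCM) (J : Set Atom) (n : ℕ) (φ : ℕ → FTerm) : Prop :=
  φ 0 = wC ∧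
  (∀ i < n, (pS0, [φ (i + 1), φ i]) ∈ J ∧ (pS, [φ (i + 1), φ i]) ∈ J) ∧
  (pR 0, [φ n, φ n]) ∈ J ∧
  (∀ j < M.p, (pT j, [φ n, φ n, φ n]) ∈ J)

lemma ChainOK.map {M : TCM} {J : Set Atom} {n : ℕ} {φ : ℕ → FTerm} {H : Subst}
    (hH : IsHomOn H J J) (hC : ChainOK M J n φ) :
    ChainOK M J n (fun i => applyT H (φ i)) := by
  obtain ⟨h0, hch, hR, hT⟩ := hC
  refine ⟨by show applyT H (φ 0) = wC; rw [h0]; rfl, fun i hi => ⟨?_, ?_⟩, ?_, fun j hj => ?_⟩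
  · exact hH _ (hch i hi).1
  · exact hH _ (hch i hi).2
  · exact hH _ hR
  · exact hH _ (hT j hj)

lemma chain_edge {M : TCM} {J : Set Atom} {n : ℕ} {φ : ℕ → FTerm}
    (hC : ChainOK M J n φ) (hww : (pS, [wC, wC]) ∈ J) {u : ℕ} (hu : u ≤ n) :
    (pS, [φ u, φ (u - 1)]) ∈ J := by
  rcases Nat.eq_zero_or_pos u with rfl | hpos
  · rw [show (0 : ℕ) - 1 = 0 from rfl, hC.1]
    exact hww
  · have h := (hC.2.1 (u - 1) (by omega)).2
    rw [show u - 1 + 1 = u from by omega] at h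
    exact h

/-! #### Substitutions for the concrete rules -/

def σ012 (x y z : FTerm) : Subst := fun v =>
  match v with
  | Sum.inr _ => wC
  | Sum.inl k => if k = 0 then x else if k = 1 then y else z

lemma σ012_0 (x y z : FTerm) : σ012 x y z (Sum.inl 0) = x := by simp [σ012]
lemma σ012_1 (x y z : FTerm) : σ012 x y z (Sum.inl 1) = y := by norm_num [σ012]
lemma σ012_2 (x y z : FTerm) : σ012 x y z (Sum.inl 2) = z := by norm_num [σ012]

def σG6 (x u y : FTerm) : Subst := fun v =>
  match v with
  | Sum.inr _ => wC
  | Sum.inl k => if k = 0 then x else if k = 1 then y else u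

def σT (x : FTerm) (r q : ℕ) (cy cz : ℕ → FTerm) : Subst := fun v =>
  match v with
  | Sum.inr _ => wC
  | Sum.inl k =>
      if k = 0 then x else if k = 1 then cy 0 else if k = 2 then cz 0
      else if k = 3 then cy r else if k = 4 then cz q
      else if k ≤ 10 + r then cy (k - 10) else cz (k - (11 + r))

/-! #### Generic closure for datalog heads -/

lemma close_head {M : TCM} (D : Deriv (RM M) IE) {X : ChaseVariant}
    (hFair : D.Fair X) {N : ℕ} (hN : D.steps N = none) {r : Rule} (hr : r ∈ RM M)
    {σ : Subst} (hon : IsHomOn σ ↑r.1 (D.inst N)) {h : Atom} (hh : h ∈ r.2)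
    (hvars : ∀ v ∈ atomVarsF h, v ∈ varsF r.1) :
    ∃ H, IsHomOn H (D.inst N) (D.inst N) ∧ applyA H (applyA σ h) ∈ D.inst N := by
  set t : Trigger := ⟨r, σ⟩ with ht
  obtain ⟨H, hHJ, hout⟩ := homClose D hFair hN (show t.rule ∈ RM M from hr)
    (show t.isOn _ from hon)
  refine ⟨H, hHJ, ?_⟩
  have heq : applyA t.extSub h = applyA σ h := by
    show (h.1, _) = (h.1, _)
    refine congrArg _ (List.map_congr_left fun term hterm => ?_)
    cases term with
    | inl c => rfl
    | inr v =>
      show t.extSub v = σ v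
      unfold Trigger.extSub
      rw [if_pos (hvars v (mem_atomVarsF.mpr hterm))]
  have := hout _ (Finset.mem_coe.mpr (Finset.mem_image_of_mem _ hh))
  rw [heq] at this
  exact this

/-! #### Rule memberships -/

lemma ruleS_mem (M : TCM) : ruleS ∈ RM M := by unfold RM; apply Finset.mem_union_left; simp
lemma ruleFloodProp_mem (M : TCM) : ruleFloodProp ∈ RM M := by
  unfold RM; apply Finset.mem_union_left; simp
lemma ruleSEnd_mem (M : TCM) : ruleSEnd ∈ RM M := by
  unfold RM; apply Finset.mem_union_left; simp
lemma ruleGInit_mem (M : TCM) : ruleGInit ∈ RM M := by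
  unfold RM; apply Finset.mem_union_left; simp
lemma ruleFloodGen_mem (M : TCM) : ruleFloodGen M ∈ RM M := by
  unfold RM; apply Finset.mem_union_left; simp
lemma ruleEx_mem (M : TCM) : ruleEx M ∈ RM M := by
  unfold RM; apply Finset.mem_union_left; simp
lemma ruleR_mem (M : TCM) {i : ℕ} (hi : i < M.p) : ruleR M i ∈ RM M := by
  unfold RM; apply Finset.mem_union_right
  rw [Finset.mem_biUnion]
  exact ⟨i, Finset.mem_range.mpr hi, by simp⟩
lemma ruleT_mem (M : TCM) {i : ℕ} (hi : i < M.p) : ruleT M i ∈ RM M := by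
  unfold RM; apply Finset.mem_union_right
  rw [Finset.mem_biUnion]
  exact ⟨i, Finset.mem_range.mpr hi, by simp⟩
lemma ruleGStep_mem (M : TCM) {i : ℕ} (hi : i < M.p) : ruleGStep i ∈ RM M := by
  unfold RM; apply Finset.mem_union_right
  rw [Finset.mem_biUnion]
  exact ⟨i, Finset.mem_range.mpr hi, by simp⟩

/-! #### Body variable memberships -/

lemma vars_ruleSEnd : (Sum.inl 0 : Var) ∈ varsF ruleSEnd.1 :=
  mem_varsF.mpr ⟨(pEnd, [vt 0]), by simp [ruleSEnd], by simp [vt]⟩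
lemma vars_ruleS (k : ℕ) (hk : k = 0 ∨ k = 1) : (Sum.inl k : Var) ∈ varsF ruleS.1 :=
  mem_varsF.mpr ⟨(pS0, [vt 0, vt 1]), by simp [ruleS], by rcases hk with rfl | rfl <;> simp [vt]⟩
lemma vars_ruleFloodProp (k : ℕ) (hk : k = 0 ∨ k = 1) :
    (Sum.inl k : Var) ∈ varsF ruleFloodProp.1 :=
  mem_varsF.mpr ⟨(pS, [vt 0, vt 1]), by simp [ruleFloodProp],
    by rcases hk with rfl | rfl <;> simp [vt]⟩
lemma vars_ruleFloodGen {M : TCM} (k : ℕ) (hk : k = 0 ∨ k = 1 ∨ k = 2) :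
    (Sum.inl k : Var) ∈ varsF (ruleFloodGen M).1 := by
  rcases hk with rfl | rfl | rfl
  · exact mem_varsF.mpr ⟨(pFlood, [vt 0]), by simp [ruleFloodGen], by simp [vt]⟩
  · exact mem_varsF.mpr ⟨(pFlood, [vt 1]), by simp [ruleFloodGen], by simp [vt]⟩
  · exact mem_varsF.mpr ⟨(pFlood, [vt 2]), by simp [ruleFloodGen], by simp [vt]⟩
lemma vars_ruleR {M : TCM} (i : ℕ) (k : ℕ) (hk : k = 0 ∨ k = 1 ∨ k = 2) :
    (Sum.inl k : Var) ∈ varsF (ruleR M i).1 := by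
  rcases hk with rfl | rfl | rfl
  · exact mem_varsF.mpr ⟨(pR i, [vt 0, vt 1]), by simp [ruleR], by simp [vt]⟩
  · exact mem_varsF.mpr ⟨(pR i, [vt 0, vt 1]), by simp [ruleR], by simp [vt]⟩
  · exact mem_varsF.mpr ⟨(pS, [vt 1, vt 2]), by simp [ruleR], by simp [vt]⟩
lemma vars_ruleGStep (i : ℕ) (k : ℕ) (hk : k = 0 ∨ k = 1 ∨ k = 2) :
    (Sum.inl k : Var) ∈ varsF (ruleGStep i).1 := by
  rcases hk with rfl | rfl | rfl
  · exact mem_varsF.mpr ⟨(pG, [vt 0, vt 1]), by simp [ruleGStep], by simp [vt]⟩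
  · exact mem_varsF.mpr ⟨(pG, [vt 0, vt 1]), by simp [ruleGStep], by simp [vt]⟩
  · exact mem_varsF.mpr ⟨(pT i, [vt 0, vt 1, vt 2]), by simp [ruleGStep], by simp [vt]⟩

lemma spath_var_left {a b base ℓ : ℕ} (hℓ : 0 < ℓ) :
    (Sum.inl a : Var) ∈ varsF (spath a b base ℓ) := by
  refine mem_varsF.mpr ⟨(pS, [pathVar a b base ℓ 0, pathVar a b base ℓ 1]), ?_, ?_⟩
  · exact Finset.mem_image_of_mem _ (Finset.mem_range.mpr hℓ)
  · have : pathVar a b base ℓ 0 = vt a := by unfold pathVar; rw [if_pos rfl]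
    rw [this]; simp [vt]

lemma spath_var_right {a b base ℓ : ℕ} (hℓ : 0 < ℓ) :
    (Sum.inl b : Var) ∈ varsF (spath a b base ℓ) := by
  refine mem_varsF.mpr ⟨(pS, [pathVar a b base ℓ (ℓ - 1), pathVar a b base ℓ (ℓ - 1 + 1)]),
    ?_, ?_⟩
  · exact Finset.mem_image_of_mem _ (Finset.mem_range.mpr (by omega))
  · have : pathVar a b base ℓ (ℓ - 1 + 1) = vt b := by
      unfold pathVar
      rw [if_neg (by omega), if_pos (by omega)]
    rw [this]; simp [vt]

lemma vars_ruleGInit (k : ℕ) (hk : k = 0 ∨ k = 1) :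
    (Sum.inl k : Var) ∈ varsF ruleGInit.1 := by
  rcases hk with rfl | rfl
  · exact spath_var_left (by omega)
  · exact spath_var_right (by omega)

lemma vars_ruleT_0 {M : TCM} (i : ℕ) : (Sum.inl 0 : Var) ∈ varsF (ruleT M i).1 := by
  refine mem_varsF.mpr ⟨(pT i, [vt 0, vt 1, vt 2]), ?_, by simp [vt]⟩
  show _ ∈ (_ ∪ _) ∪ _
  exact Finset.mem_union_left _ (Finset.mem_union_left _ (by simp))

lemma vars_ruleT_3 {M : TCM} (i : ℕ) (hr : 0 < M.ri i) :
    (Sum.inl 3 : Var) ∈ varsF (ruleT M i).1 := by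
  obtain ⟨a, haA, hmem⟩ := mem_varsF.mp (spath_var_right (a := 1) (b := 3) (base := 10) hr)
  refine mem_varsF.mpr ⟨a, ?_, hmem⟩
  show _ ∈ (_ ∪ _) ∪ _
  exact Finset.mem_union_left _ (Finset.mem_union_right _ haA)

lemma vars_ruleT_4 {M : TCM} (i : ℕ) (hq : 0 < M.qi i) :
    (Sum.inl 4 : Var) ∈ varsF (ruleT M i).1 := by
  obtain ⟨a, haA, hmem⟩ :=
    mem_varsF.mp (spath_var_right (a := 2) (b := 4) (base := 11 + M.ri i) hq)
  refine mem_varsF.mpr ⟨a, ?_, hmem⟩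
  show _ ∈ (_ ∪ _) ∪ _
  exact Finset.mem_union_right _ haA

/-! #### spath satisfaction -/

lemma spath_isOn {J : Set Atom} {a b base ℓ : ℕ} {σ : Subst} (c : ℕ → FTerm)
    (hσa : σ (Sum.inl a) = c 0) (hσb : σ (Sum.inl b) = c ℓ)
    (hσmid : ∀ j, 0 < j → j < ℓ → σ (Sum.inl (base + j)) = c j)
    (hedge : ∀ j < ℓ, (pS, [c j, c (j + 1)]) ∈ J) :
    ∀ atom ∈ spath a b base ℓ, applyA σ atom ∈ J := by
  intro atom hatom
  obtain ⟨j, hj, rfl⟩ := Finset.mem_image.mp hatom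
  rw [Finset.mem_range] at hj
  have h1 : applyT σ (pathVar a b base ℓ j) = c j := by
    unfold pathVar
    by_cases hj0 : j = 0
    · rw [if_pos hj0, hj0]; exact hσa
    · rw [if_neg hj0, if_neg (by omega : ¬ j = ℓ)]
      exact hσmid j (by omega) (by omega)
  have h2 : applyT σ (pathVar a b base ℓ (j + 1)) = c (j + 1) := by
    unfold pathVar
    rw [if_neg (by omega : ¬ j + 1 = 0)]
    by_cases hjn : j + 1 = ℓ
    · rw [if_pos hjn, hjn]; exact hσb
    · rw [if_neg hjn]
      exact hσmid (j + 1) (by omega) (by omega)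
  show (pS, [applyT σ (pathVar a b base ℓ j), applyT σ (pathVar a b base ℓ (j + 1))]) ∈ J
  rw [h1, h2]
  exact hedge j hj

/-! #### Base facts at `w` -/

lemma mem_one_list {v : Var} {k1 : ℕ} (h : Sum.inr v ∈ ([vt k1] : List FTerm)) :
    v = Sum.inl k1 := by simpa [vt] using h

lemma mem_pair_list {v : Var} {k1 k2 : ℕ} (h : Sum.inr v ∈ ([vt k1, vt k2] : List FTerm)) :
    v = Sum.inl k1 ∨ v = Sum.inl k2 := by simpa [vt] using h

lemma mem_triple_list {v : Var} {k1 k2 k3 : ℕ}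
    (h : Sum.inr v ∈ ([vt k1, vt k2, vt k3] : List FTerm)) :
    v = Sum.inl k1 ∨ v = Sum.inl k2 ∨ v = Sum.inl k3 := by simpa [vt] using h

lemma cw_vt (k : ℕ) : applyT (σ012 wC wC wC) (vt k) = wC := by
  show (if k = 0 then wC else if k = 1 then wC else wC) = wC
  split_ifs <;> rfl

lemma hEndJ {M : TCM} (D : Deriv (RM M) IE) (N : ℕ) : (pEnd, [wC]) ∈ D.inst N :=
  instSeq_le (Nat.zero_le N) rfl

lemma base_facts {M : TCM} (D : Deriv (RM M) IE) {X : ChaseVariant}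
    (hFair : D.Fair X) {N : ℕ} (hN : D.steps N = none) :
    (pS, [wC, wC]) ∈ D.inst N ∧ (pG, [wC, wC]) ∈ D.inst N ∧
    (∀ j < M.p, (pR j, [wC, wC]) ∈ D.inst N) ∧
    (∀ j < M.p, (pT j, [wC, wC, wC]) ∈ D.inst N) := by
  set cw := σ012 wC wC wC with hcw
  have hEnd := hEndJ D N
  have hS : (pS, [wC, wC]) ∈ D.inst N := by
    have hon : IsHomOn cw ↑(ruleSEnd.1) (D.inst N) := by
      intro a ha
      simp only [ruleSEnd, Finset.coe_singleton, Set.mem_singleton_iff] at ha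
      subst ha
      show (pEnd, [applyT cw (vt 0)]) ∈ _
      rw [cw_vt]
      exact hEnd
    obtain ⟨H, hHJ, hm⟩ := close_head D hFair hN (ruleSEnd_mem M) hon
      (h := (pS, [vt 0, vt 0])) (by simp [ruleSEnd])
      (fun v hv => by
        rcases mem_pair_list (mem_atomVarsF.mp hv) with rfl | rfl <;> exact vars_ruleSEnd)
    have e1 : applyA cw (pS, [vt 0, vt 0]) = (pS, [wC, wC]) := by
      show (pS, [applyT cw (vt 0), applyT cw (vt 0)]) = _
      rw [cw_vt]
    rw [e1] at hm
    exact hm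
  have hFl : (pFlood, [wC]) ∈ D.inst N := by
    have hon : IsHomOn cw ↑(ruleFloodProp.1) (D.inst N) := by
      intro a ha
      simp only [ruleFloodProp, Finset.coe_singleton, Set.mem_singleton_iff] at ha
      subst ha
      show (pS, [applyT cw (vt 0), applyT cw (vt 1)]) ∈ _
      rw [cw_vt, cw_vt]
      exact hS
    obtain ⟨H, hHJ, hm⟩ := close_head D hFair hN (ruleFloodProp_mem M) hon
      (h := (pFlood, [vt 1])) (by simp [ruleFloodProp])
      (fun v hv => by
        rw [show v = Sum.inl 1 from mem_one_list (mem_atomVarsF.mp hv)]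
        exact vars_ruleFloodProp 1 (Or.inr rfl))
    have e1 : applyA cw (pFlood, [vt 1]) = (pFlood, [wC]) := by
      show (pFlood, [applyT cw (vt 1)]) = _
      rw [cw_vt]
    rw [e1] at hm
    exact hm
  have honF : IsHomOn cw ↑((ruleFloodGen M).1) (D.inst N) := by
    intro a ha
    simp only [ruleFloodGen, Finset.coe_insert, Set.mem_insert_iff, Finset.coe_singleton,
      Set.mem_singleton_iff] at ha
    rcases ha with rfl | rfl | rfl <;>
      (show (pFlood, [applyT cw (vt _)]) ∈ _
       rw [cw_vt]
       exact hFl)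
  have hvarsF : ∀ (h : Atom), (∀ u ∈ h.2, ∃ k, k < 3 ∧ u = vt k) →
      ∀ v ∈ atomVarsF h, v ∈ varsF (ruleFloodGen M).1 := by
    intro h hu v hv
    rw [mem_atomVarsF] at hv
    obtain ⟨k, hk, hvk⟩ := hu _ hv
    have : Sum.inr v = vt k := hvk
    rw [show v = Sum.inl k from Sum.inr.inj this]
    exact vars_ruleFloodGen k (by omega)
  have hG : (pG, [wC, wC]) ∈ D.inst N := by
    obtain ⟨H, hHJ, hm⟩ := close_head D hFair hN (ruleFloodGen_mem M) honF
      (h := (pG, [vt 0, vt 1]))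
      (Finset.mem_union_left _ (by simp))
      (hvarsF _ (by
        intro u hu
        rcases (by simpa using hu : u = vt 0 ∨ u = vt 1) with rfl | rfl
        exacts [⟨0, by omega, rfl⟩, ⟨1, by omega, rfl⟩]))
    have e1 : applyA cw (pG, [vt 0, vt 1]) = (pG, [wC, wC]) := by
      show (pG, [applyT cw (vt 0), applyT cw (vt 1)]) = _
      rw [cw_vt, cw_vt]
    rw [e1] at hm
    exact hm
  have hR : ∀ j < M.p, (pR j, [wC, wC]) ∈ D.inst N := by
    intro j hj
    obtain ⟨H, hHJ, hm⟩ := close_head D hFair hN (ruleFloodGen_mem M) honF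
      (h := (pR j, [vt 0, vt 1]))
      (Finset.mem_union_right _ (Finset.mem_biUnion.mpr
        ⟨j, Finset.mem_range.mpr hj, by simp⟩))
      (hvarsF _ (by
        intro u hu
        rcases (by simpa using hu : u = vt 0 ∨ u = vt 1) with rfl | rfl
        exacts [⟨0, by omega, rfl⟩, ⟨1, by omega, rfl⟩]))
    have e1 : applyA cw (pR j, [vt 0, vt 1]) = (pR j, [wC, wC]) := by
      show (pR j, [applyT cw (vt 0), applyT cw (vt 1)]) = _
      rw [cw_vt, cw_vt]
    rw [e1] at hm
    exact hm
  have hT : ∀ j < M.p, (pT j, [wC, wC, wC]) ∈ D.inst N := by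
    intro j hj
    obtain ⟨H, hHJ, hm⟩ := close_head D hFair hN (ruleFloodGen_mem M) honF
      (h := (pT j, [vt 0, vt 1, vt 2]))
      (Finset.mem_union_right _ (Finset.mem_biUnion.mpr
        ⟨j, Finset.mem_range.mpr hj, by simp⟩))
      (hvarsF _ (by
        intro u hu
        rcases (by simpa using hu : u = vt 0 ∨ u = vt 1 ∨ u = vt 2) with rfl | rfl | rfl
        exacts [⟨0, by omega, rfl⟩, ⟨1, by omega, rfl⟩, ⟨2, by omega, rfl⟩]))
    have e1 : applyA cw (pT j, [vt 0, vt 1, vt 2]) = (pT j, [wC, wC, wC]) := by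
      show (pT j, [applyT cw (vt 0), applyT cw (vt 1), applyT cw (vt 2)]) = _
      rw [cw_vt, cw_vt, cw_vt]
    rw [e1] at hm
    exact hm
  exact ⟨hS, hG, hR, hT⟩

/-! #### σ value lemmas -/

lemma σT_val (x : FTerm) (r q : ℕ) (cy cz : ℕ → FTerm) (k : ℕ) :
    σT x r q cy cz (Sum.inl k) =
      (if k = 0 then x else if k = 1 then cy 0 else if k = 2 then cz 0
       else if k = 3 then cy r else if k = 4 then cz q
       else if k ≤ 10 + r then cy (k - 10) else cz (k - (11 + r))) := rfl

lemma σG6_0 (x u y : FTerm) : σG6 x u y (Sum.inl 0) = x := by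
  show (if (0 : ℕ) = 0 then x else if (0 : ℕ) = 1 then y else u) = x
  norm_num

lemma σG6_1 (x u y : FTerm) : σG6 x u y (Sum.inl 1) = y := by
  show (if (1 : ℕ) = 0 then x else if (1 : ℕ) = 1 then y else u) = y
  norm_num

lemma σG6_11 (x u y : FTerm) : σG6 x u y (Sum.inl 11) = u := by
  show (if (11 : ℕ) = 0 then x else if (11 : ℕ) = 1 then y else u) = u
  norm_num

/-! #### The machine phase: deriving `G(top, w)` -/

lemma machine_phase {M : TCM} (hM : ¬ M.Halts) (D : Deriv (RM M) IE) {X : ChaseVariant}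
    (hFair : D.Fair X) {N : ℕ} (hN : D.steps N = none) {n : ℕ} {φ : ℕ → FTerm}
    (hC : ChainOK M (D.inst N) n φ) :
    ∃ φ', ChainOK M (D.inst N) n φ' ∧ (pG, [φ' n, wC]) ∈ D.inst N := by
  obtain ⟨hSww, hGww, hRw, hTw⟩ := base_facts D hFair hN
  rcases Nat.eq_zero_or_pos n with rfl | hn
  · exact ⟨φ, hC, by rw [hC.1]; exact hGww⟩
  have hex := exists_gIter_ge M hM n
  set j₀ := Nat.find hex with hj₀
  have hj₀spec : n ≤ M.gIter j₀ := Nat.find_spec hex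
  have hj₀min : ∀ j < j₀, M.gIter j < n := by
    intro j hj
    have := Nat.find_min hex hj
    omega
  have hInv : ∀ j, j ≤ j₀ → ∃ φ', ChainOK M (D.inst N) n φ' ∧
      (pG, [φ' n, φ' (n - M.gIter j)]) ∈ D.inst N := by
    intro j
    induction j with
    | zero =>
      intro _
      set σ := σG6 (φ n) (φ (n - 1)) (φ (n - 2)) with hσ
      have honG : IsHomOn σ ↑(ruleGInit.1) (D.inst N) := by
        intro a ha
        refine spath_isOn (fun k => φ (n - k)) ?_ ?_ ?_ ?_ a (Finset.mem_coe.mp ha)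
        · exact σG6_0 _ _ _
        · exact σG6_1 _ _ _
        · intro k hk1 hk2
          have hk : k = 1 := by omega
          subst hk
          exact σG6_11 _ _ _
        · intro k hk
          have := chain_edge hC hSww (u := n - k) (by omega)
          rw [show n - k - 1 = n - (k + 1) from by omega] at this
          exact this
      obtain ⟨H, hHJ, hm⟩ := close_head D hFair hN (ruleGInit_mem M) honG
        (h := (pG, [vt 0, vt 1])) (by simp [ruleGInit])
        (fun u hu => by
          rcases mem_pair_list (mem_atomVarsF.mp hu) with rfl | rfl
          exacts [vars_ruleGInit 0 (Or.inl rfl), vars_ruleGInit 1 (Or.inr rfl)])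
      have e1 : applyA σ (pG, [vt 0, vt 1]) = (pG, [φ n, φ (n - 2)]) := by
        show (pG, [σ (Sum.inl 0), σ (Sum.inl 1)]) = _
        rw [hσ, σG6_0, σG6_1]
      rw [e1] at hm
      refine ⟨fun i' => applyT H (φ i'), ChainOK.map hHJ hC, ?_⟩
      rw [show M.gIter 0 = 2 from rfl]
      exact hm
    | succ j ihj =>
      intro hjle
      have hjlt : j < j₀ := by omega
      obtain ⟨φ₀, hC₀, hG₀⟩ := ihj (by omega)
      obtain ⟨hrpos, hqpos, hdvd, hnext⟩ := gIter_facts M hM j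
      have hvn : M.gIter j < n := hj₀min j hjlt
      set v := M.gIter j with hv
      set i := v % M.p with hi
      have hip : i < M.p := Nat.mod_lt _ (p_pos M)
      set r := M.ri i with hr
      set q := M.qi i with hq
      have hmod1 : (1 : ℕ) < M.p := lt_of_lt_of_le one_lt_two (two_le_p M)
      -- R phase
      have hRphase : ∀ l, l ≤ v → ∃ φ', ChainOK M (D.inst N) n φ' ∧
          (pG, [φ' n, φ' (n - v)]) ∈ D.inst N ∧
          (pR (l % M.p), [φ' n, φ' (n - l)]) ∈ D.inst N := by
        intro l
        induction l with
        | zero =>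
          intro _
          refine ⟨φ₀, hC₀, hG₀, ?_⟩
          rw [Nat.zero_mod, Nat.sub_zero]
          exact hC₀.2.2.1
        | succ l ihl =>
          intro hlv
          obtain ⟨φ₁, hC₁, hG₁, hR₁⟩ := ihl (by omega)
          set σ := σ012 (φ₁ n) (φ₁ (n - l)) (φ₁ (n - (l + 1))) with hσ
          have hon : IsHomOn σ ↑((ruleR M (l % M.p)).1) (D.inst N) := by
            intro a ha
            have ha' : a = (pR (l % M.p), [vt 0, vt 1]) ∨ a = (pS, [vt 1, vt 2]) := by
              simpa [ruleR] using ha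
            rcases ha' with rfl | rfl
            · show (pR (l % M.p), [σ (Sum.inl 0), σ (Sum.inl 1)]) ∈ _
              rw [hσ, σ012_0, σ012_1]
              exact hR₁
            · show (pS, [σ (Sum.inl 1), σ (Sum.inl 2)]) ∈ _
              rw [hσ, σ012_1, σ012_2]
              have := chain_edge hC₁ hSww (u := n - l) (by omega)
              rw [show n - l - 1 = n - (l + 1) from by omega] at this
              exact this
          have hmod : (l % M.p + 1) % M.p = (l + 1) % M.p := by
            conv_rhs => rw [Nat.add_mod]
            rw [Nat.mod_eq_of_lt hmod1]
          obtain ⟨H, hHJ, hm⟩ := close_head D hFair hN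
            (ruleR_mem M (Nat.mod_lt _ (p_pos M))) hon
            (h := (pR ((l % M.p + 1) % M.p), [vt 0, vt 2])) (by simp [ruleR])
            (fun u hu => by
              rcases mem_pair_list (mem_atomVarsF.mp hu) with rfl | rfl
              exacts [vars_ruleR _ 0 (by omega), vars_ruleR _ 2 (by omega)])
          have e1 : applyA σ (pR ((l % M.p + 1) % M.p), [vt 0, vt 2])
              = (pR ((l + 1) % M.p), [φ₁ n, φ₁ (n - (l + 1))]) := by
            show (pR _, [σ (Sum.inl 0), σ (Sum.inl 2)]) = _
            rw [hσ, σ012_0, σ012_2, hmod]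
          rw [e1] at hm
          exact ⟨fun i' => applyT H (φ₁ i'), ChainOK.map hHJ hC₁, hHJ _ hG₁, hm⟩
      obtain ⟨φ₂, hC₂, hG₂, hR₂⟩ := hRphase v le_rfl
      -- T phase
      set s := v / r with hs
      have hsr : s * r = v := by rw [hs]; exact Nat.div_mul_cancel hdvd
      have hTphase : ∀ s', s' ≤ s → ∃ φ', ChainOK M (D.inst N) n φ' ∧
          (pG, [φ' n, φ' (n - v)]) ∈ D.inst N ∧
          (pR (v % M.p), [φ' n, φ' (n - v)]) ∈ D.inst N ∧
          (pT i, [φ' n, φ' (n - s' * r), φ' (n - s' * q)]) ∈ D.inst N := by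
        intro s'
        induction s' with
        | zero =>
          intro _
          refine ⟨φ₂, hC₂, hG₂, hR₂, ?_⟩
          simp only [Nat.zero_mul, Nat.sub_zero]
          exact hC₂.2.2.2 i hip
        | succ s' ihs =>
          intro hs'
          obtain ⟨φ₃, hC₃, hG₃, hR₃, hT₃⟩ := ihs (by omega)
          set Y := n - s' * r with hY
          set Z := n - s' * q with hZ
          set cy : ℕ → FTerm := fun k => φ₃ (Y - k) with hcy
          set cz : ℕ → FTerm := fun k => φ₃ (Z - k) with hcz
          set σ := σT (φ₃ n) r q cy cz with hσ
          have hσ0 : σ (Sum.inl 0) = φ₃ n := by rw [hσ, σT_val]; norm_num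
          have hσ1 : σ (Sum.inl 1) = cy 0 := by rw [hσ, σT_val]; norm_num
          have hσ2 : σ (Sum.inl 2) = cz 0 := by rw [hσ, σT_val]; norm_num
          have hσ3 : σ (Sum.inl 3) = cy r := by rw [hσ, σT_val]; norm_num
          have hσ4 : σ (Sum.inl 4) = cz q := by rw [hσ, σT_val]; norm_num
          have hσy : ∀ jj, 0 < jj → jj < r → σ (Sum.inl (10 + jj)) = cy jj := by
            intro jj h1 h2
            rw [hσ, σT_val]
            rw [if_neg (by omega), if_neg (by omega), if_neg (by omega), if_neg (by omega),
              if_neg (by omega), if_pos (by omega)]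
            rw [show 10 + jj - 10 = jj from by omega]
          have hσz : ∀ jj, 0 < jj → jj < q → σ (Sum.inl (11 + r + jj)) = cz jj := by
            intro jj h1 h2
            rw [hσ, σT_val]
            rw [if_neg (by omega), if_neg (by omega), if_neg (by omega), if_neg (by omega),
              if_neg (by omega), if_neg (by omega)]
            rw [show 11 + r + jj - (11 + r) = jj from by omega]
          have hedgy : ∀ jj, jj < r → (pS, [cy jj, cy (jj + 1)]) ∈ D.inst N := by
            intro jj hjj
            have := chain_edge hC₃ hSww (u := Y - jj) (by omega)
            rw [show Y - jj - 1 = Y - (jj + 1) from by omega] at this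
            exact this
          have hedgz : ∀ jj, jj < q → (pS, [cz jj, cz (jj + 1)]) ∈ D.inst N := by
            intro jj hjj
            have := chain_edge hC₃ hSww (u := Z - jj) (by omega)
            rw [show Z - jj - 1 = Z - (jj + 1) from by omega] at this
            exact this
          have hon : IsHomOn σ ↑((ruleT M i).1) (D.inst N) := by
            intro a ha
            have ha' : a ∈ (({(pT i, [vt 0, vt 1, vt 2])} : Finset Atom) ∪ spath 1 3 10 r)
                ∪ spath 2 4 (11 + r) q := Finset.mem_coe.mp ha
            rcases Finset.mem_union.mp ha' with ha2 | ha2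
            · rcases Finset.mem_union.mp ha2 with ha3 | ha3
              · rw [Finset.mem_singleton.mp ha3]
                show (pT i, [σ (Sum.inl 0), σ (Sum.inl 1), σ (Sum.inl 2)]) ∈ _
                rw [hσ0, hσ1, hσ2]
                exact hT₃
              · exact spath_isOn cy hσ1 hσ3 hσy hedgy a ha3
            · exact spath_isOn cz hσ2 hσ4 hσz hedgz a ha2
          obtain ⟨H, hHJ, hm⟩ := close_head D hFair hN (ruleT_mem M hip) hon
            (h := (pT i, [vt 0, vt 3, vt 4])) (by simp [ruleT])
            (fun u hu => by
              rcases mem_triple_list (mem_atomVarsF.mp hu) with rfl | rfl | rfl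
              exacts [vars_ruleT_0 i, vars_ruleT_3 i hrpos, vars_ruleT_4 i hqpos])
          have e1 : applyA σ (pT i, [vt 0, vt 3, vt 4])
              = (pT i, [φ₃ n, φ₃ (n - (s' + 1) * r), φ₃ (n - (s' + 1) * q)]) := by
            show (pT i, [σ (Sum.inl 0), σ (Sum.inl 3), σ (Sum.inl 4)]) = _
            rw [hσ0, hσ3, hσ4]
            show (pT i, [φ₃ n, φ₃ (Y - r), φ₃ (Z - q)]) = _
            rw [hY, hZ, Nat.sub_sub, Nat.sub_sub, ← Nat.succ_mul, ← Nat.succ_mul]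
          rw [e1] at hm
          exact ⟨fun i' => applyT H (φ₃ i'), ChainOK.map hHJ hC₃, hHJ _ hG₃, hHJ _ hR₃, hm⟩
      obtain ⟨φ₄, hC₄, hG₄, hR₄, hT₄⟩ := hTphase s le_rfl
      rw [hsr] at hT₄
      have hsq : s * q = M.gIter (j + 1) := by rw [hnext]
      rw [hsq] at hT₄
      -- G step
      set σ := σ012 (φ₄ n) (φ₄ (n - v)) (φ₄ (n - M.gIter (j + 1))) with hσ
      have hon : IsHomOn σ ↑((ruleGStep i).1) (D.inst N) := by
        intro a ha
        have ha' : a = (pG, [vt 0, vt 1]) ∨ a = (pR i, [vt 0, vt 1]) ∨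
            a = (pT i, [vt 0, vt 1, vt 2]) := by simpa [ruleGStep] using ha
        rcases ha' with rfl | rfl | rfl
        · show (pG, [σ (Sum.inl 0), σ (Sum.inl 1)]) ∈ _
          rw [hσ, σ012_0, σ012_1]
          exact hG₄
        · show (pR i, [σ (Sum.inl 0), σ (Sum.inl 1)]) ∈ _
          rw [hσ, σ012_0, σ012_1]
          exact hR₄
        · show (pT i, [σ (Sum.inl 0), σ (Sum.inl 1), σ (Sum.inl 2)]) ∈ _
          rw [hσ, σ012_0, σ012_1, σ012_2]
          exact hT₄
      obtain ⟨H, hHJ, hm⟩ := close_head D hFair hN (ruleGStep_mem M hip) hon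
        (h := (pG, [vt 0, vt 2])) (by simp [ruleGStep])
        (fun u hu => by
          rcases mem_pair_list (mem_atomVarsF.mp hu) with rfl | rfl
          exacts [vars_ruleGStep i 0 (by omega), vars_ruleGStep i 2 (by omega)])
      have e1 : applyA σ (pG, [vt 0, vt 2])
          = (pG, [φ₄ n, φ₄ (n - M.gIter (j + 1))]) := by
        show (pG, [σ (Sum.inl 0), σ (Sum.inl 2)]) = _
        rw [hσ, σ012_0, σ012_2]
      rw [e1] at hm
      exact ⟨fun i' => applyT H (φ₄ i'), ChainOK.map hHJ hC₄, hm⟩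
  obtain ⟨φ', hC', hG'⟩ := hInv j₀ le_rfl
  refine ⟨φ', hC', ?_⟩
  rw [show n - M.gIter j₀ = 0 from by omega, hC'.1] at hG'
  exact hG'

/-! #### Chain extension via rule (9) -/

lemma extend_chain {M : TCM} (D : Deriv (RM M) IE) {X : ChaseVariant}
    (hFair : D.Fair X) {N : ℕ} (hN : D.steps N = none) {n : ℕ} {φ : ℕ → FTerm}
    (hC : ChainOK M (D.inst N) n φ) (hG : (pG, [φ n, wC]) ∈ D.inst N) :
    ∃ φ', ChainOK M (D.inst N) (n + 1) φ' := by
  set σ := σ012 wC (φ n) wC with hσ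
  set t : Trigger := ⟨ruleEx M, σ⟩ with ht
  have hon : t.isOn (D.inst N) := by
    intro a ha
    have ha' : a = (pG, [vt 1, vt 2]) ∨ a = (pEnd, [vt 2]) := by simpa [ht, ruleEx] using ha
    rcases ha' with rfl | rfl
    · show (pG, [σ (Sum.inl 1), σ (Sum.inl 2)]) ∈ _
      rw [hσ, σ012_1, σ012_2]
      exact hG
    · show (pEnd, [σ (Sum.inl 2)]) ∈ _
      rw [hσ, σ012_2]
      exact hEndJ D N
  obtain ⟨H, hHJ, hout⟩ := homClose D hFair hN (ruleEx_mem M) hon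
  set xS : FTerm := t.extSub (Sum.inl 0) with hxS
  have hext1 : t.extSub (Sum.inl 1) = φ n := by
    unfold Trigger.extSub
    rw [if_pos (show (Sum.inl 1 : Var) ∈ varsF t.rule.1 from ruleEx_body_vars1)]
    exact σ012_1 wC (φ n) wC
  have memout : ∀ h ∈ (ruleEx M).2, applyA H (applyA t.extSub h) ∈ D.inst N := by
    intro h hh
    exact hout _ (Finset.mem_coe.mpr (Finset.mem_image_of_mem _ hh))
  have hS0' : (pS0, [applyT H xS, applyT H (φ n)]) ∈ D.inst N := by
    have hm := memout (pS0, [vt 0, vt 1])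
      (Finset.mem_union_left _ (by simp))
    have e1 : applyA t.extSub (pS0, [vt 0, vt 1]) = (pS0, [xS, φ n]) := by
      show (pS0, [t.extSub (Sum.inl 0), t.extSub (Sum.inl 1)]) = _
      rw [hext1, ← hxS]
    rw [e1] at hm
    exact hm
  have hR0' : (pR 0, [applyT H xS, applyT H xS]) ∈ D.inst N := by
    have hm := memout (pR 0, [vt 0, vt 0])
      (Finset.mem_union_left _ (by simp))
    have e1 : applyA t.extSub (pR 0, [vt 0, vt 0]) = (pR 0, [xS, xS]) := by
      show (pR 0, [t.extSub (Sum.inl 0), t.extSub (Sum.inl 0)]) = _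
      rw [← hxS]
    rw [e1] at hm
    exact hm
  have hT' : ∀ j < M.p, (pT j, [applyT H xS, applyT H xS, applyT H xS]) ∈ D.inst N := by
    intro j hj
    have hm := memout (pT j, [vt 0, vt 0, vt 0])
      (Finset.mem_union_right _ (Finset.mem_biUnion.mpr
        ⟨j, Finset.mem_range.mpr hj, by simp⟩))
    have e1 : applyA t.extSub (pT j, [vt 0, vt 0, vt 0]) = (pT j, [xS, xS, xS]) := by
      show (pT j, [t.extSub (Sum.inl 0), t.extSub (Sum.inl 0), t.extSub (Sum.inl 0)]) = _
      rw [← hxS]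
    rw [e1] at hm
    exact hm
  -- rule (1) closure to get the S edge
  set x' : FTerm := applyT H xS with hx'
  set top' : FTerm := applyT H (φ n) with htop'
  set σ₂ := σ012 x' top' wC with hσ₂
  have hon₂ : IsHomOn σ₂ ↑(ruleS.1) (D.inst N) := by
    intro a ha
    have ha' : a = (pS0, [vt 0, vt 1]) := by simpa [ruleS] using ha
    subst ha'
    show (pS0, [σ₂ (Sum.inl 0), σ₂ (Sum.inl 1)]) ∈ _
    rw [hσ₂, σ012_0, σ012_1]
    exact hS0'
  obtain ⟨H₂, hH₂J, hm₂⟩ := close_head D hFair hN (ruleS_mem M) hon₂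
    (h := (pS, [vt 0, vt 1])) (by simp [ruleS])
    (fun u hu => by
      rcases mem_pair_list (mem_atomVarsF.mp hu) with rfl | rfl
      exacts [vars_ruleS 0 (Or.inl rfl), vars_ruleS 1 (Or.inr rfl)])
  have e2 : applyA σ₂ (pS, [vt 0, vt 1]) = (pS, [x', top']) := by
    show (pS, [σ₂ (Sum.inl 0), σ₂ (Sum.inl 1)]) = _
    rw [hσ₂, σ012_0, σ012_1]
  rw [e2] at hm₂
  -- assemble
  set φ' : ℕ → FTerm := fun k => if k = n + 1 then applyT H₂ x'
    else applyT H₂ (applyT H (φ k)) with hφ'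
  have hval : ∀ k, k ≠ n + 1 → φ' k = applyT H₂ (applyT H (φ k)) := by
    intro k hk
    rw [hφ']
    exact if_neg hk
  have hvaltop : φ' (n + 1) = applyT H₂ x' := by rw [hφ']; exact if_pos rfl
  refine ⟨φ', ?_, ?_, ?_, ?_⟩
  · rw [hval 0 (by omega), hC.1]
    rfl
  · intro i hi
    by_cases hin : i = n
    · rw [hin, hvaltop, hval n (by omega)]
      constructor
      · exact hH₂J _ hS0'
      · exact hm₂
    · have hi' : i < n := by omega
      rw [hval (i + 1) (by omega), hval i (by omega)]
      exact ⟨hH₂J _ (hHJ _ (hC.2.1 i hi').1), hH₂J _ (hHJ _ (hC.2.1 i hi').2)⟩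
  · rw [hvaltop]
    exact hH₂J _ hR0'
  · intro j hj
    rw [hvaltop]
    exact hH₂J _ (hT' j hj)

/-! #### Arbitrarily long chains -/

lemma chains {M : TCM} (hM : ¬ M.Halts) (D : Deriv (RM M) IE) {X : ChaseVariant}
    (hFair : D.Fair X) {N : ℕ} (hN : D.steps N = none) :
    ∀ n, ∃ φ, ChainOK M (D.inst N) n φ := by
  intro n
  induction n with
  | zero =>
    obtain ⟨hSww, hGww, hRw, hTw⟩ := base_facts D hFair hN
    exact ⟨fun _ => wC, rfl, fun i hi => absurd hi (by omega), hRw 0 (p_pos M), hTw⟩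
  | succ n ih =>
    obtain ⟨φ, hC⟩ := ih
    obtain ⟨φ', hC', hG'⟩ := machine_phase hM D hFair hN hC
    exact extend_chain D hFair hN hC' hG'

/-! #### Chains are injective -/

lemma chain_inj {M : TCM} (D : Deriv (RM M) IE) {N n : ℕ} {φ : ℕ → FTerm}
    (hC : ChainOK M (D.inst N) n φ) :
    ∀ i j, i < j → j ≤ n → φ i ≠ φ j := by
  have desc : ∀ d i j, i < j → j ≤ n → φ i = φ j → d ≤ i → φ (i - d) = φ (j - d) := by
    intro d
    induction d with
    | zero =>
      intro i j _ _ he _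
      simpa using he
    | succ d ih =>
      intro i j hij hjn he hdi
      have h1 := ih i j hij hjn he (by omega)
      have ha : (pS0, [φ (i - d), φ (i - d - 1)]) ∈ D.inst N := by
        have := (hC.2.1 (i - d - 1) (by omega)).1
        rw [show i - d - 1 + 1 = i - d from by omega] at this
        exact this
      have hb : (pS0, [φ (j - d), φ (j - d - 1)]) ∈ D.inst N := by
        have := (hC.2.1 (j - d - 1) (by omega)).1
        rw [show j - d - 1 + 1 = j - d from by omega] at this
        exact this
      rw [h1] at ha
      have hfun := S0_func D ha hb
      rw [show i - d - 1 = i - (d + 1) from by omega,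
        show j - d - 1 = j - (d + 1) from by omega] at hfun
      exact hfun
  intro i j hij hjn he
  have h0 := desc i i j hij hjn he le_rfl
  rw [Nat.sub_self, hC.1] at h0
  have ha : (pS0, [φ (j - i), φ (j - i - 1)]) ∈ D.inst N := by
    have := (hC.2.1 (j - i - 1) (by omega)).1
    rw [show j - i - 1 + 1 = j - i from by omega] at this
    exact this
  rw [← h0] at ha
  exact S0_no_w D ha

/-! #### Finiteness -/

lemma inst_finite {Rset : Finset Rule} {I : Set Atom} (D : Deriv Rset I) (hI : I.Finite) :
    ∀ n, (D.inst n).Finite := by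
  intro n
  induction n with
  | zero => exact hI
  | succ n ih =>
    show (D.inst n ∪ _).Finite
    apply Set.Finite.union ih
    cases hsn : D.steps n with
    | none => exact Set.finite_empty
    | some t => exact t.out.finite_toSet

lemma adom_finite {Rset : Finset Rule} {I : Set Atom} (D : Deriv Rset I) (hI : I.Finite)
    (n : ℕ) : (adom (D.inst n)).Finite := by
  have h1 : adom (D.inst n) = ⋃ a ∈ D.inst n, {x | x ∈ a.2} := by
    ext x
    simp [adom, Set.mem_iUnion]
  rw [h1]
  exact Set.Finite.biUnion (inst_finite D hI n) (fun a _ => a.2.finite_toSet)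


end Stmt4

/-- if `M` does not halt, there is no terminating (fair and finite)
`X`-derivation from `⟨R_M, {End(w)}⟩`. -/
theorem stmt_4 (M : TCM) (hM : ¬ M.Halts) (X : ChaseVariant) :
    ¬ ∃ D : Deriv (RM M) IE, D.IsX X ∧ D.Fair X ∧ D.Finite := by
  rintro ⟨D, _, hFair, hFin⟩
  obtain ⟨N, hN⟩ := hFin
  have hIE : (IE : Set Atom).Finite := Set.finite_singleton _
  have hfin := Stmt4.adom_finite D hIE N
  set F := hfin.toFinset with hF
  set n := F.card + 1 with hn
  obtain ⟨φ, hC⟩ := Stmt4.chains hM D hFair hN n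
  have hmem : ∀ k : ℕ, k < n → φ (k + 1) ∈ adom (D.inst N) := by
    intro k hk
    exact ⟨(pS0, [φ (k + 1), φ k]), (hC.2.1 k hk).1, by simp⟩
  have hinj := Stmt4.chain_inj D hC
  have hcard : n ≤ F.card := by
    have hle := Fintype.card_le_of_injective
      (fun k : Fin n => (⟨φ (k.1 + 1), hfin.mem_toFinset.mpr (hmem k.1 k.2)⟩ :
        {x // x ∈ F}))
      (by
        intro a b hab
        have h1 : φ (a.1 + 1) = φ (b.1 + 1) := congrArg Subtype.val hab
        by_contra hne
        have hne' : a.1 ≠ b.1 := fun e => hne (Fin.ext e)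
        rcases Nat.lt_or_ge a.1 b.1 with hlt | hge
        · exact hinj (a.1 + 1) (b.1 + 1) (by omega) (by omega) h1
        · have hlt : b.1 < a.1 := by omega
          exact hinj (b.1 + 1) (a.1 + 1) (by omega) (by omega) h1.symm)
    rwa [Fintype.card_fin, Fintype.card_coe] at hle
  omega

end
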